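/- arXiv:1611.00653 — 5 statements merged into one kernel-verified Lean document; each statement's English description precedes it below -/
import Mathlib

section
/- Let 0 < λ ≤ Λ and let A be an n×n complex matrix belonging to 𝒜_{λ,Λ}, and set Λ_A := max{ |⟨Aξ,η⟩| : |ξ| = |η| = 1 }. Then the function p ↦ Δ_p(A) is nonincreasing on [2,∞), and it is Lipschitz there: |Δ_p(A) − Δ_{p'}(A)| ≤ (Λ_A/2)·|p − p'| for all p, p' ∈ [2,∞). -/
open scoped BigOperators ComplexConjugate Matrix

noncomputable section

namespace Paper

/-- The sesquilinear pairing `⟨z,w⟩ = ∑ j, z j * conj (w j)` on `ℂⁿ`. -/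
def herm {n : ℕ} (z w : Fin n → ℂ) : ℂ := ∑ j, z j * conj (w j)

/-- Euclidean norm of a complex vector, `|z| = √⟨z,z⟩`. -/
def cnorm {n : ℕ} (z : Fin n → ℂ) : ℝ := Real.sqrt (herm z z).re

/-- Componentwise complex conjugate of a vector. -/
def vconj {n : ℕ} (z : Fin n → ℂ) : Fin n → ℂ := fun j => conj (z j)

/-- The ℝ-linear map `𝒥_p(α + iβ) = α/p + iβ/q`, where `1/p + 1/q = 1`,
i.e. `1/q = 1 - 1/p`. -/
def Jmap {n : ℕ} (p : ℝ) (ξ : Fin n → ℂ) : Fin n → ℂ :=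
  fun j => (((ξ j).re / p : ℝ) : ℂ) + Complex.I * (((ξ j).im * (1 - 1 / p) : ℝ) : ℂ)

/-- `Δ_p(A) = 2 · min { Re⟨Aξ, 𝒥_p ξ⟩ : ξ ∈ ℂⁿ, |ξ| = 1 }`. -/
def Deltap {n : ℕ} (p : ℝ) (A : Matrix (Fin n) (Fin n) ℂ) : ℝ :=
  sInf {t : ℝ | ∃ ξ : Fin n → ℂ, cnorm ξ = 1 ∧
    t = 2 * (herm (A.mulVec ξ) (Jmap p ξ)).re}

/-- `Δ_r(A) = min { Re⟨Aξ,ξ⟩ − |1 − 2/r|·|⟨Aξ,ξ̄⟩| : |ξ| = 1 }`, the extension of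
`Δ_p` to all `r > 0`. -/
def DeltaGen {n : ℕ} (r : ℝ) (A : Matrix (Fin n) (Fin n) ℂ) : ℝ :=
  sInf {t : ℝ | ∃ ξ : Fin n → ℂ, cnorm ξ = 1 ∧
    t = (herm (A.mulVec ξ) ξ).re - |1 - 2 / r| * ‖herm (A.mulVec ξ) (vconj ξ)‖}

/-- Membership in the class `𝒜_{λ,Λ}`:
`Re⟨Aξ,ξ⟩ ≥ λ|ξ|²` and `|⟨Aξ,η⟩| ≤ Λ|ξ||η|`. -/
def memA {n : ℕ} (lam Lam : ℝ) (A : Matrix (Fin n) (Fin n) ℂ) : Prop :=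
  (∀ ξ : Fin n → ℂ, lam * cnorm ξ ^ 2 ≤ (herm (A.mulVec ξ) ξ).re) ∧
  (∀ ξ η : Fin n → ℂ, ‖herm (A.mulVec ξ) η‖ ≤ Lam * cnorm ξ * cnorm η)

/-- `λ_A = min { Re⟨Aξ,ξ⟩ : |ξ| = 1 }`. -/
def lamA {n : ℕ} (A : Matrix (Fin n) (Fin n) ℂ) : ℝ :=
  sInf {t : ℝ | ∃ ξ : Fin n → ℂ, cnorm ξ = 1 ∧ t = (herm (A.mulVec ξ) ξ).re}

/-- `Λ_A = max { |⟨Aξ,η⟩| : |ξ| = |η| = 1 }`. -/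
def LamA {n : ℕ} (A : Matrix (Fin n) (Fin n) ℂ) : ℝ :=
  sSup {t : ℝ | ∃ ξ η : Fin n → ℂ, cnorm ξ = 1 ∧ cnorm η = 1 ∧
    t = ‖herm (A.mulVec ξ) η‖}

/-- `μ(A) = inf { Re⟨Aξ,ξ⟩/|⟨Aξ,ξ̄⟩| : ⟨Aξ,ξ̄⟩ ≠ 0 }`. -/
def muA {n : ℕ} (A : Matrix (Fin n) (Fin n) ℂ) : ℝ :=
  sInf {t : ℝ | ∃ ξ : Fin n → ℂ, herm (A.mulVec ξ) (vconj ξ) ≠ 0 ∧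
    t = (herm (A.mulVec ξ) ξ).re / ‖herm (A.mulVec ξ) (vconj ξ)‖}

/-- Second real Fréchet derivative of `F : ℂ → ℝ` at `ζ`, as a bilinear expression. -/
def D2 (F : ℂ → ℝ) (ζ : ℂ) (ξ η : ℂ) : ℝ := fderiv ℝ (fderiv ℝ F) ζ ξ η

/-- `F : ℂ → ℝ` is twice real-Fréchet differentiable at `ζ`. -/
def TwiceDiffAt (F : ℂ → ℝ) (ζ : ℂ) : Prop :=
  DifferentiableAt ℝ F ζ ∧ DifferentiableAt ℝ (fderiv ℝ F) ζ

/-- `H_F^A[ζ;ξ] = ∑ j, D²F(ζ)[ξ_j, (Aξ)_j]`. -/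
def HFA {n : ℕ} (F : ℂ → ℝ) (A : Matrix (Fin n) (Fin n) ℂ) (ζ : ℂ) (ξ : Fin n → ℂ) : ℝ :=
  ∑ j, D2 F ζ (ξ j) (A.mulVec ξ j)

/-- The power function `F_r(ζ) = |ζ|^r`. -/
def Fpow (r : ℝ) (ζ : ℂ) : ℝ := ‖ζ‖ ^ r

/-- Real dot product. -/
def rdot {n : ℕ} (u v : Fin n → ℝ) : ℝ := ∑ j, u j * v j

/-- Euclidean norm of a real vector. -/
def enorm {n : ℕ} (u : Fin n → ℝ) : ℝ := Real.sqrt (∑ j, u j ^ 2)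

/-- Operator norm `‖M‖ = max { |Mu| : |u| = 1 }` of a real matrix. -/
def opnormR {n : ℕ} (M : Matrix (Fin n) (Fin n) ℝ) : ℝ :=
  sSup {t : ℝ | ∃ u : Fin n → ℝ, enorm u = 1 ∧ t = enorm (M.mulVec u)}

/-- Symmetric part `M_s = (M + Mᵀ)/2`. -/
def symPart {n : ℕ} {R : Type*} [Field R] (M : Matrix (Fin n) (Fin n) R) :
    Matrix (Fin n) (Fin n) R := (2 : R)⁻¹ • (M + Mᵀ)

/-- Antisymmetric part `M_a = (M − Mᵀ)/2`. -/
def antiPart {n : ℕ} {R : Type*} [Field R] (M : Matrix (Fin n) (Fin n) R) :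
    Matrix (Fin n) (Fin n) R := (2 : R)⁻¹ • (M - Mᵀ)

/-- `𝒱_p(V) = ((p−2)/(2√(p−1)))·V_s + (p/(2√(p−1)))·V_a`. -/
def Vmap {n : ℕ} (p : ℝ) (V : Matrix (Fin n) (Fin n) ℝ) : Matrix (Fin n) (Fin n) ℝ :=
  ((p - 2) / (2 * Real.sqrt (p - 1))) • symPart V + (p / (2 * Real.sqrt (p - 1))) • antiPart V

/-- A real matrix is (symmetric) positive definite. -/
def RPosDef {n : ℕ} (M : Matrix (Fin n) (Fin n) ℝ) : Prop :=
  Mᵀ = M ∧ ∀ u : Fin n → ℝ, u ≠ 0 → 0 < rdot (M.mulVec u) u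

/-- The complex matrix `U + iV` built from two real matrices. -/
def cplx {n : ℕ} (U V : Matrix (Fin n) (Fin n) ℝ) : Matrix (Fin n) (Fin n) ℂ :=
  Matrix.of fun i j => ((U i j : ℂ) + Complex.I * (V i j : ℂ))

/-- `Φ : ℂ×ℂ → ℝ` is twice real-Fréchet differentiable at `v`. -/
def TwiceDiffAt2 (Φ : ℂ × ℂ → ℝ) (v : ℂ × ℂ) : Prop :=
  DifferentiableAt ℝ Φ v ∧ DifferentiableAt ℝ (fderiv ℝ Φ) v

/-- `H_Φ^{(A,B)}[v;ω] = ∑ j, D²Φ(v)[(ω₁ⱼ, ω₂ⱼ), ((Aω₁)ⱼ, (Bω₂)ⱼ)]`. -/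
def HAB {n : ℕ} (Φ : ℂ × ℂ → ℝ) (A B : Matrix (Fin n) (Fin n) ℂ) (v : ℂ × ℂ)
    (ω₁ ω₂ : Fin n → ℂ) : ℝ :=
  ∑ j, fderiv ℝ (fderiv ℝ Φ) v (ω₁ j, ω₂ j) (A.mulVec ω₁ j, B.mulVec ω₂ j)

/-- The Nazarov–Treil Bellman function `Q_{p,δ}` (with `q = p/(p−1)` passed explicitly). -/
def QNT (p q δ : ℝ) (ζ η : ℂ) : ℝ :=
  ‖ζ‖ ^ p + ‖η‖ ^ q +
    δ * (if ‖ζ‖ ^ p ≤ ‖η‖ ^ q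
      then ‖ζ‖ ^ (2 : ℝ) * ‖η‖ ^ (2 - q)
      else (2 / p) * ‖ζ‖ ^ p + (2 / q - 1) * ‖η‖ ^ q)

/-- `Δ_p` of a matrix-valued function on a subset `Ω ⊆ ℝᵐ`:
`2 · essinf_{x∈Ω} min_{|ξ|=1} Re⟨A(x)ξ, 𝒥_p ξ⟩`. -/
def DeltapAE {m n : ℕ} (p : ℝ) (A : (Fin m → ℝ) → Matrix (Fin n) (Fin n) ℂ)
    (Ω : Set (Fin m → ℝ)) : ℝ :=
  2 * essInf (fun x => sInf {t : ℝ | ∃ ξ : Fin n → ℂ, cnorm ξ = 1 ∧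
      t = (herm ((A x).mulVec ξ) (Jmap p ξ)).re}) (MeasureTheory.volume.restrict Ω)

end Paper

namespace S9Aux

lemma jterm (p : ℝ) (hp : p ≠ 0) (w z : ℂ) :
    2 * (w * conj ((((z.re)/p : ℝ):ℂ) + Complex.I * ((z.im*(1-1/p) : ℝ):ℂ))) =
      w * conj z + ((2/p - 1 : ℝ):ℂ) * (w * z) := by
  simp only [map_add, map_mul, Complex.conj_I, Complex.conj_ofReal]
  rw [Complex.ext_iff]
  constructor <;>
  · simp [Complex.ext_iff, Complex.mul_re, Complex.mul_im]
    field_simp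
    ring

lemma rot (z : ℂ) : ∃ u : ℂ, ‖u‖ = 1 ∧ u^2 * z = (‖z‖ : ℂ) := by
  refine ⟨Complex.exp ((-(z.arg)/2 : ℝ) * Complex.I), Complex.norm_exp_ofReal_mul_I _, ?_⟩
  have h := Complex.norm_mul_exp_arg_mul_I z
  have e2 : ((2:ℕ):ℂ) * (((-(z.arg)/2 : ℝ):ℂ) * Complex.I) + (z.arg:ℂ) * Complex.I = 0 := by
    push_cast; ring
  calc Complex.exp ((-(z.arg)/2 : ℝ) * Complex.I) ^ 2 * z
      = (‖z‖ : ℂ) * (Complex.exp ((-(z.arg)/2 : ℝ) * Complex.I) ^ 2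
          * Complex.exp (z.arg * Complex.I)) := by nth_rw 2 [← h]; ring
    _ = (‖z‖ : ℂ) := by
        rw [← Complex.exp_nat_mul, ← Complex.exp_add, e2, Complex.exp_zero, mul_one]

variable {n : ℕ}

lemma herm_smul (u v : ℂ) (ξ η : Fin n → ℂ) :
    Paper.herm (fun j => u * ξ j) (fun j => v * η j) = u * conj v * Paper.herm ξ η := by
  unfold Paper.herm
  rw [Finset.mul_sum]
  refine Finset.sum_congr rfl fun j _ => ?_
  simp only [map_mul]
  ring

lemma mulVec_smul' (A : Matrix (Fin n) (Fin n) ℂ) (u : ℂ) (ξ : Fin n → ℂ) :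
    A.mulVec (fun j => u * ξ j) = fun j => u * A.mulVec ξ j := by
  have h : (fun j => u * ξ j) = u • ξ := by funext j; simp
  rw [h, A.mulVec_smul]
  funext j; simp

lemma vconj_smul (u : ℂ) (ξ : Fin n → ℂ) :
    Paper.vconj (fun j => u * ξ j) = fun j => conj u * Paper.vconj ξ j := by
  funext j; simp [Paper.vconj]

lemma cnorm_vconj (ξ : Fin n → ℂ) : Paper.cnorm (Paper.vconj ξ) = Paper.cnorm ξ := by
  unfold Paper.cnorm
  congr 2
  unfold Paper.herm Paper.vconj
  refine Finset.sum_congr rfl fun j _ => ?_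
  simp only [Complex.conj_conj]
  ring

lemma expand (p : ℝ) (hp : p ≠ 0) (w ξ : Fin n → ℂ) :
    2 * (Paper.herm w (Paper.Jmap p ξ)).re =
      (Paper.herm w ξ).re + (2/p - 1) * (Paper.herm w (Paper.vconj ξ)).re := by
  have hC : (2:ℂ) * Paper.herm w (Paper.Jmap p ξ) =
      Paper.herm w ξ + ((2/p - 1 : ℝ):ℂ) * Paper.herm w (Paper.vconj ξ) := by
    unfold Paper.herm Paper.Jmap Paper.vconj
    rw [Finset.mul_sum, Finset.mul_sum, ← Finset.sum_add_distrib]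
    refine Finset.sum_congr rfl fun j _ => ?_
    have h := jterm p hp (w j) (ξ j)
    simpa [Complex.conj_conj] using h
  have h2 := congrArg Complex.re hC
  simpa using h2

lemma rotate (A : Matrix (Fin n) (Fin n) ℂ) (ξ : Fin n → ℂ) (hξ : Paper.cnorm ξ = 1) :
    ∃ ω : Fin n → ℂ, Paper.cnorm ω = 1 ∧
      Paper.herm (A.mulVec ω) ω = Paper.herm (A.mulVec ξ) ξ ∧
      Paper.herm (A.mulVec ω) (Paper.vconj ω) =
        (‖Paper.herm (A.mulVec ξ) (Paper.vconj ξ)‖ : ℂ) := by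
  obtain ⟨u, hu1, hu2⟩ := rot (Paper.herm (A.mulVec ξ) (Paper.vconj ξ))
  have huc : u * conj u = 1 := by
    rw [Complex.mul_conj, Complex.normSq_eq_norm_sq, hu1]; norm_num
  refine ⟨fun j => u * ξ j, ?_, ?_, ?_⟩
  · unfold Paper.cnorm at hξ ⊢
    rw [herm_smul, huc, one_mul]
    exact hξ
  · rw [mulVec_smul', herm_smul, huc, one_mul]
  · rw [mulVec_smul', vconj_smul, herm_smul, Complex.conj_conj, ← hu2]
    ring

end S9Aux
/-- `p ↦ Δ_p(A)` is nonincreasing on `[2,∞)` and Lipschitz there with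
constant `Λ_A/2`. -/
theorem statement9 (n : ℕ) (lam Lam : ℝ) (hlam : 0 < lam) (hLam : lam ≤ Lam)
    (A : Matrix (Fin n) (Fin n) ℂ) (hA : Paper.memA lam Lam A) :
    (∀ p p' : ℝ, 2 ≤ p → p ≤ p' → Paper.Deltap p' A ≤ Paper.Deltap p A) ∧
    (∀ p p' : ℝ, 2 ≤ p → 2 ≤ p' →
      |Paper.Deltap p A - Paper.Deltap p' A| ≤ (Paper.LamA A / 2) * |p - p'|) := by
  classical
  rcases Nat.eq_zero_or_pos n with hn | hn
  · subst hn
    have hcn : ∀ ξ : Fin 0 → ℂ, Paper.cnorm ξ = 0 := by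
      intro ξ; simp [Paper.cnorm, Paper.herm]
    have hset : ∀ p : ℝ, {t : ℝ | ∃ ξ : Fin 0 → ℂ, Paper.cnorm ξ = 1 ∧
        t = 2 * (Paper.herm (A.mulVec ξ) (Paper.Jmap p ξ)).re} = (∅ : Set ℝ) := by
      intro p
      rw [Set.eq_empty_iff_forall_notMem]
      rintro t ⟨ξ, h1, -⟩
      rw [hcn ξ] at h1; norm_num at h1
    have hD : ∀ p : ℝ, Paper.Deltap p A = 0 := by
      intro p; unfold Paper.Deltap; rw [hset p, Real.sInf_empty]
    have hsetL : {t : ℝ | ∃ ξ η : Fin 0 → ℂ, Paper.cnorm ξ = 1 ∧ Paper.cnorm η = 1 ∧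
        t = ‖Paper.herm (A.mulVec ξ) η‖} = (∅ : Set ℝ) := by
      rw [Set.eq_empty_iff_forall_notMem]
      rintro t ⟨ξ, η, h1, -, -⟩
      rw [hcn ξ] at h1; norm_num at h1
    have hL : Paper.LamA A = 0 := by
      unfold Paper.LamA; rw [hsetL, Real.sSup_empty]
    constructor
    · intro p p' _ _; rw [hD p, hD p']
    · intro p p' _ _; rw [hD p, hD p', hL]; simp
  · set S : ℝ → Set ℝ := fun p => {t : ℝ | ∃ ξ : Fin n → ℂ, Paper.cnorm ξ = 1 ∧
      t = 2 * (Paper.herm (A.mulVec ξ) (Paper.Jmap p ξ)).re} with hSdef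
    have hDS : ∀ p : ℝ, Paper.Deltap p A = sInf (S p) := fun p => rfl
    set e : Fin n → ℂ := fun j => if j = ⟨0, hn⟩ then 1 else 0 with hedef
    have he : Paper.cnorm e = 1 := by
      have h1 : Paper.herm e e = 1 := by
        unfold Paper.herm
        simp [hedef, apply_ite, Finset.sum_ite_eq']
      unfold Paper.cnorm
      rw [h1]
      simp
    have hup : ∀ ξ : Fin n → ℂ, Paper.cnorm ξ = 1 →
        ‖Paper.herm (A.mulVec ξ) (Paper.vconj ξ)‖ ≤ Lam := by
      intro ξ h
      have h2 := hA.2 ξ (Paper.vconj ξ)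
      rw [S9Aux.cnorm_vconj, h] at h2
      simpa using h2
    have hLb : BddAbove {t : ℝ | ∃ ξ η : Fin n → ℂ, Paper.cnorm ξ = 1 ∧ Paper.cnorm η = 1 ∧
        t = ‖Paper.herm (A.mulVec ξ) η‖} := by
      refine ⟨Lam, ?_⟩
      rintro t ⟨ξ, η, h1, h2, rfl⟩
      have h3 := hA.2 ξ η
      rw [h1, h2] at h3
      simpa using h3
    have hLamA_ub : ∀ ξ : Fin n → ℂ, Paper.cnorm ξ = 1 →
        ‖Paper.herm (A.mulVec ξ) (Paper.vconj ξ)‖ ≤ Paper.LamA A := by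
      intro ξ h
      exact le_csSup hLb ⟨ξ, Paper.vconj ξ, h, by rw [S9Aux.cnorm_vconj, h], rfl⟩
    have hLamA0 : 0 ≤ Paper.LamA A :=
      le_trans (norm_nonneg _) (hLamA_ub e he)
    have hR : ∀ ξ : Fin n → ℂ, Paper.cnorm ξ = 1 → lam ≤ (Paper.herm (A.mulVec ξ) ξ).re := by
      intro ξ h
      have h2 := hA.1 ξ
      rw [h] at h2
      simpa using h2
    have hbdd : ∀ p : ℝ, 2 ≤ p → BddBelow (S p) := by
      intro p hp
      refine ⟨lam - Lam, ?_⟩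
      rintro t ⟨ξ, h1, rfl⟩
      rw [S9Aux.expand p (by linarith) _ ξ]
      have hRξ := hR ξ h1
      have hz := hup ξ h1
      have hre : |(Paper.herm (A.mulVec ξ) (Paper.vconj ξ)).re| ≤ Lam :=
        le_trans (Complex.abs_re_le_norm _) hz
      have hc : |2/p - 1| ≤ 1 := by
        rw [abs_le]
        constructor
        · have : 0 < 2/p := by positivity
          linarith
        · have : 2/p ≤ 1 := by rw [div_le_one (by linarith)]; linarith
          linarith
      have habs : |(2/p - 1) * (Paper.herm (A.mulVec ξ) (Paper.vconj ξ)).re| ≤ 1 * Lam := by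
        rw [abs_mul]
        exact mul_le_mul hc hre (abs_nonneg _) zero_le_one
      have h5 := neg_abs_le ((2/p - 1) * (Paper.herm (A.mulVec ξ) (Paper.vconj ξ)).re)
      linarith
    have hne : ∀ p : ℝ, (S p).Nonempty := fun p => ⟨_, e, he, rfl⟩
    have hmono : ∀ p p' : ℝ, 2 ≤ p → p ≤ p' → Paper.Deltap p' A ≤ Paper.Deltap p A := by
      intro p p' hp hpp'
      have hp' : 2 ≤ p' := le_trans hp hpp'
      rw [hDS p, hDS p']
      apply le_csInf (hne p)
      rintro t ⟨ξ, h1, rfl⟩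
      obtain ⟨ω, hω1, hωR, hωZ⟩ := S9Aux.rotate A ξ h1
      have key : sInf (S p') ≤ 2 * (Paper.herm (A.mulVec ω) (Paper.Jmap p' ω)).re :=
        csInf_le (hbdd p' hp') ⟨ω, hω1, rfl⟩
      rw [S9Aux.expand p' (by linarith) _ ω, hωR, hωZ] at key
      rw [S9Aux.expand p (by linarith) _ ξ]
      simp only [Complex.ofReal_re] at key
      have h3 : (Paper.herm (A.mulVec ξ) (Paper.vconj ξ)).re ≤
          ‖Paper.herm (A.mulVec ξ) (Paper.vconj ξ)‖ := Complex.re_le_norm _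
      have h4 : 0 ≤ ‖Paper.herm (A.mulVec ξ) (Paper.vconj ξ)‖ :=
        norm_nonneg _
      have h1' : 2/p' ≤ 2/p := by
        rw [div_le_div_iff₀ (by linarith) (by linarith)]
        nlinarith
      have s1 := mul_le_mul_of_nonneg_right
        (by linarith : 2/p' - 1 ≤ 2/p - 1) h4
      have h2' : 2/p ≤ 1 := by rw [div_le_one (by linarith)]; linarith
      have s2 := mul_le_mul_of_nonpos_left h3 (by linarith : 2/p - 1 ≤ 0)
      linarith
    have hlip : ∀ p p' : ℝ, 2 ≤ p → p ≤ p' →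
        Paper.Deltap p A ≤ Paper.Deltap p' A + (Paper.LamA A / 2) * (p' - p) := by
      intro p p' hp hpp'
      have hp' : 2 ≤ p' := le_trans hp hpp'
      rw [hDS p, hDS p']
      have hlb : ∀ t ∈ S p', sInf (S p) - (Paper.LamA A / 2) * (p' - p) ≤ t := by
        rintro t ⟨ξ, h1, rfl⟩
        have key : sInf (S p) ≤ 2 * (Paper.herm (A.mulVec ξ) (Paper.Jmap p ξ)).re :=
          csInf_le (hbdd p hp) ⟨ξ, h1, rfl⟩
        rw [S9Aux.expand p (by linarith) _ ξ] at key
        rw [S9Aux.expand p' (by linarith) _ ξ]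
        have hz : ‖Paper.herm (A.mulVec ξ) (Paper.vconj ξ)‖ ≤ Paper.LamA A :=
          hLamA_ub ξ h1
        have h3 : (Paper.herm (A.mulVec ξ) (Paper.vconj ξ)).re ≤
            ‖Paper.herm (A.mulVec ξ) (Paper.vconj ξ)‖ := Complex.re_le_norm _
        have hcoef : 0 ≤ 2/p - 2/p' := by
          rw [sub_nonneg, div_le_div_iff₀ (by linarith) (by linarith)]
          nlinarith
        have h4 : (4:ℝ) ≤ p * p' := by nlinarith
        have hq : 2/p - 2/p' ≤ (p' - p)/2 := by
          rw [div_sub_div _ _ (by linarith : p ≠ 0) (by linarith : p' ≠ 0),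
            div_le_div_iff₀ (by nlinarith) (by norm_num : (0:ℝ) < 2)]
          nlinarith
        have s1 : (2/p - 2/p') * (Paper.herm (A.mulVec ξ) (Paper.vconj ξ)).re ≤
            (2/p - 2/p') * Paper.LamA A :=
          mul_le_mul_of_nonneg_left (le_trans h3 hz) hcoef
        have s2 : (2/p - 2/p') * Paper.LamA A ≤ ((p' - p)/2) * Paper.LamA A :=
          mul_le_mul_of_nonneg_right hq hLamA0
        have hring : (Paper.LamA A / 2) * (p' - p) = ((p' - p)/2) * Paper.LamA A := by ring
        nlinarith [s1, s2, key]
      have h6 := le_csInf (hne p') hlb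
      linarith
    refine ⟨hmono, ?_⟩
    intro p p' hp hp'
    rcases le_total p p' with h | h
    · have h1 := hmono p p' hp h
      have h2 := hlip p p' hp h
      rw [abs_of_nonneg (by linarith : (0:ℝ) ≤ Paper.Deltap p A - Paper.Deltap p' A),
        abs_of_nonpos (by linarith : p - p' ≤ 0)]
      have hring : (Paper.LamA A / 2) * -(p - p') = (Paper.LamA A / 2) * (p' - p) := by ring
      linarith
    · have h1 := hmono p' p hp' h
      have h2 := hlip p' p hp' h
      rw [abs_of_nonpos (by linarith : Paper.Deltap p A - Paper.Deltap p' A ≤ 0),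
        abs_of_nonneg (by linarith : (0:ℝ) ≤ p - p')]
      linarith
end
end

section
/- Let n ≥ 1, φ ∈ ℝ and p ∈ (1,∞), and let Iₙ be the n×n identity matrix. Then Δ_p(e^{iφ}·Iₙ) = cos φ − |1 − 2/p|. -/
open scoped BigOperators ComplexConjugate Matrix

noncomputable section

private lemma key_formula {n : ℕ} (φ p : ℝ) (hp : 1 < p) (ξ : Fin n → ℂ) :
    2 * (Paper.herm ((Complex.exp (φ * Complex.I) • (1 : Matrix (Fin n) (Fin n) ℂ)).mulVec ξ)
        (Paper.Jmap p ξ)).re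
      = Real.cos φ * ((∑ j, (ξ j).re ^ 2) + (∑ j, (ξ j).im ^ 2))
        + (1 - 2 / p) * (Real.cos φ * ((∑ j, (ξ j).im ^ 2) - (∑ j, (ξ j).re ^ 2))
            + Real.sin φ * (2 * ∑ j, (ξ j).re * (ξ j).im)) := by
  have hp0 : p ≠ 0 := by linarith
  have per : ∀ z : ℂ,
      2 * ((Complex.exp (φ * Complex.I) * z) *
          conj (((z.re / p : ℝ) : ℂ) + Complex.I * ((z.im * (1 - 1 / p) : ℝ) : ℂ))).re
        = Real.cos φ * z.re ^ 2 + Real.cos φ * z.im ^ 2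
          + ((1 - 2 / p) * Real.cos φ) * z.im ^ 2 - ((1 - 2 / p) * Real.cos φ) * z.re ^ 2
          + ((1 - 2 / p) * Real.sin φ * 2) * (z.re * z.im) := by
    intro z
    simp [Complex.mul_re, Complex.mul_im, Complex.exp_ofReal_mul_I_re,
      Complex.exp_ofReal_mul_I_im]
    field_simp
    ring
  rw [Matrix.smul_mulVec, Matrix.one_mulVec]
  unfold Paper.herm Paper.Jmap
  rw [Complex.re_sum, Finset.mul_sum]
  simp only [Pi.smul_apply, smul_eq_mul]
  rw [Finset.sum_congr rfl fun j _ => per (ξ j)]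
  simp only [Finset.sum_add_distrib, Finset.sum_sub_distrib, ← Finset.mul_sum]
  ring

private lemma herm_self_re {n : ℕ} (ξ : Fin n → ℂ) :
    (Paper.herm ξ ξ).re = ∑ j, ((ξ j).re ^ 2 + (ξ j).im ^ 2) := by
  unfold Paper.herm
  rw [Complex.re_sum]
  refine Finset.sum_congr rfl fun j _ => ?_
  simp [Complex.mul_re]
  ring

/-- `Δ_p(e^{iφ}·Iₙ) = cos φ − |1 − 2/p|`. -/
theorem statement11 (n : ℕ) (hn : 1 ≤ n) (φ p : ℝ) (hp : 1 < p) :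
    Paper.Deltap p (Complex.exp (φ * Complex.I) • (1 : Matrix (Fin n) (Fin n) ℂ))
      = Real.cos φ - |1 - 2 / p| := by
  have hlb : ∀ t ∈ {t : ℝ | ∃ ξ : Fin n → ℂ, Paper.cnorm ξ = 1 ∧
      t = 2 * (Paper.herm ((Complex.exp (φ * Complex.I) •
        (1 : Matrix (Fin n) (Fin n) ℂ)).mulVec ξ) (Paper.Jmap p ξ)).re},
      Real.cos φ - |1 - 2 / p| ≤ t := by
    rintro t ⟨ξ, hξ, rfl⟩
    rw [key_formula φ p hp ξ]
    set A := ∑ j, (ξ j).re ^ 2 with hA_def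
    set B := ∑ j, (ξ j).im ^ 2 with hB_def
    set C := ∑ j, (ξ j).re * (ξ j).im with hC_def
    have hA : 0 ≤ A := Finset.sum_nonneg fun j _ => sq_nonneg _
    have hB : 0 ≤ B := Finset.sum_nonneg fun j _ => sq_nonneg _
    have hAB : A + B = 1 := by
      have h1 : (Paper.herm ξ ξ).re = 1 := by
        have := hξ
        unfold Paper.cnorm at this
        have hnn : (0:ℝ) ≤ (Paper.herm ξ ξ).re := by
          rw [herm_self_re]
          exact Finset.sum_nonneg fun j _ => by positivity
        nlinarith [Real.sq_sqrt hnn, Real.sqrt_nonneg (Paper.herm ξ ξ).re]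
      rw [herm_self_re] at h1
      rw [hA_def, hB_def, ← Finset.sum_add_distrib]
      exact h1
    have hC : C ^ 2 ≤ A * B :=
      Finset.sum_mul_sq_le_sq_mul_sq Finset.univ (fun j => (ξ j).re) (fun j => (ξ j).im)
    set T := Real.cos φ * (B - A) + Real.sin φ * (2 * C) with hT_def
    have hsmall : (B - A) ^ 2 + (2 * C) ^ 2 ≤ 1 := by nlinarith [hC, hAB]
    have hT2 : T ^ 2 ≤ 1 := by
      have e : T ^ 2 + (Real.sin φ * (B - A) - Real.cos φ * (2 * C)) ^ 2
          = ((B - A) ^ 2 + (2 * C) ^ 2) * (Real.sin φ ^ 2 + Real.cos φ ^ 2) := by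
        rw [hT_def]; ring
      rw [Real.sin_sq_add_cos_sq, mul_one] at e
      nlinarith [sq_nonneg (Real.sin φ * (B - A) - Real.cos φ * (2 * C))]
    have hTabs : |T| ≤ 1 := (sq_le_one_iff_abs_le_one T).mp hT2
    have : -(|1 - 2 / p|) ≤ (1 - 2 / p) * T := by
      have h := abs_mul (1 - 2 / p) T
      have h2 : |(1 - 2 / p) * T| ≤ |1 - 2 / p| := by
        rw [h]
        calc |1 - 2 / p| * |T| ≤ |1 - 2 / p| * 1 :=
          mul_le_mul_of_nonneg_left hTabs (abs_nonneg _)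
        _ = |1 - 2 / p| := mul_one _
      linarith [neg_abs_le ((1 - 2 / p) * T)]
    rw [hAB]
    linarith
  have hwit : ∀ θ : ℝ, ∃ ξ : Fin n → ℂ, Paper.cnorm ξ = 1 ∧
      2 * (Paper.herm ((Complex.exp (φ * Complex.I) •
        (1 : Matrix (Fin n) (Fin n) ℂ)).mulVec ξ) (Paper.Jmap p ξ)).re
      = Real.cos φ + (1 - 2 / p) * (Real.cos φ * (Real.sin θ ^ 2 - Real.cos θ ^ 2)
          + Real.sin φ * (2 * (Real.cos θ * Real.sin θ))) := by
    intro θ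
    have h0 : 0 < n := hn
    set i0 : Fin n := ⟨0, h0⟩ with hi0
    refine ⟨fun j => if j = i0 then ((Real.cos θ : ℂ) + (Real.sin θ : ℂ) * Complex.I) else 0,
      ?_, ?_⟩
    · unfold Paper.cnorm
      rw [herm_self_re]
      have : ∀ j : Fin n,
          ((if j = i0 then ((Real.cos θ : ℂ) + (Real.sin θ : ℂ) * Complex.I) else 0).re ^ 2
            + (if j = i0 then ((Real.cos θ : ℂ) + (Real.sin θ : ℂ) * Complex.I) else 0).im ^ 2)
          = if j = i0 then 1 else 0 := by
        intro j
        by_cases h : j = i0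
        · simp only [h, if_pos]
          simp only [Complex.add_re, Complex.add_im, Complex.ofReal_re, Complex.ofReal_im,
            Complex.mul_re, Complex.mul_im, Complex.I_re, Complex.I_im]
          nlinarith [Real.sin_sq_add_cos_sq θ]
        · simp [h]
      rw [Finset.sum_congr rfl fun j _ => this j]
      simp [Real.sqrt_one]
    · rw [key_formula φ p hp]
      have hre : ∀ j : Fin n,
          (if j = i0 then ((Real.cos θ : ℂ) + (Real.sin θ : ℂ) * Complex.I) else 0).re
          = if j = i0 then Real.cos θ else 0 := by
        intro j; by_cases h : j = i0 <;>
          simp only [h, if_pos, if_neg, Complex.add_re, Complex.ofReal_re, Complex.mul_re,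
            Complex.I_re, Complex.I_im, Complex.ofReal_im, Complex.zero_re, mul_zero, mul_one,
            zero_mul, sub_zero, add_zero, if_true, ite_eq_right_iff] <;> simp [h]
      have him : ∀ j : Fin n,
          (if j = i0 then ((Real.cos θ : ℂ) + (Real.sin θ : ℂ) * Complex.I) else 0).im
          = if j = i0 then Real.sin θ else 0 := by
        intro j; by_cases h : j = i0
        · simp only [h, if_pos, Complex.add_im, Complex.ofReal_im, Complex.mul_im,
            Complex.I_re, Complex.I_im, Complex.ofReal_re, if_true]
          ring
        · simp [h]
      simp only [hre, him]
      have s1 : ∑ j : Fin n, (if j = i0 then Real.cos θ else 0) ^ 2 = Real.cos θ ^ 2 := by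
        rw [Finset.sum_eq_single i0 (fun b _ hb => by simp [hb])
          (fun h => absurd (Finset.mem_univ i0) h)]
        simp
      have s2 : ∑ j : Fin n, (if j = i0 then Real.sin θ else 0) ^ 2 = Real.sin θ ^ 2 := by
        rw [Finset.sum_eq_single i0 (fun b _ hb => by simp [hb])
          (fun h => absurd (Finset.mem_univ i0) h)]
        simp
      have s3 : ∑ j : Fin n, (if j = i0 then Real.cos θ else 0) *
          (if j = i0 then Real.sin θ else 0) = Real.cos θ * Real.sin θ := by
        rw [Finset.sum_eq_single i0 (fun b _ hb => by simp [hb])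
          (fun h => absurd (Finset.mem_univ i0) h)]
        simp
      rw [s1, s2, s3, Real.cos_sq_add_sin_sq]
      ring
  unfold Paper.Deltap
  apply le_antisymm
  · by_cases hs : 0 ≤ 1 - 2 / p
    · obtain ⟨ξ, h1, h2⟩ := hwit (-(φ / 2))
      apply csInf_le ⟨_, hlb⟩
      refine ⟨ξ, h1, ?_⟩
      rw [h2, abs_of_nonneg hs]
      have e1 : Real.cos φ = 2 * Real.cos (φ / 2) ^ 2 - 1 := by
        have h := Real.cos_two_mul (φ / 2); rwa [show 2 * (φ / 2) = φ by ring] at h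
      have e2 : Real.sin φ = 2 * Real.sin (φ / 2) * Real.cos (φ / 2) := by
        have h := Real.sin_two_mul (φ / 2); rwa [show 2 * (φ / 2) = φ by ring] at h
      have e3 := Real.sin_sq_add_cos_sq (φ / 2)
      simp only [Real.sin_neg, Real.cos_neg]
      have hkey : Real.cos φ * ((-Real.sin (φ / 2)) ^ 2 - Real.cos (φ / 2) ^ 2)
          + Real.sin φ * (2 * (Real.cos (φ / 2) * -Real.sin (φ / 2))) = -1 := by
        linear_combination (Real.sin (φ / 2) ^ 2 - Real.cos (φ / 2) ^ 2) * e1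
          - (2 * Real.cos (φ / 2) * Real.sin (φ / 2)) * e2
          - (2 * Real.cos (φ / 2) ^ 2 + 1) * e3
      rw [hkey]; ring
    · obtain ⟨ξ, h1, h2⟩ := hwit (Real.pi / 2 - φ / 2)
      apply csInf_le ⟨_, hlb⟩
      refine ⟨ξ, h1, ?_⟩
      rw [h2, abs_of_neg (lt_of_not_ge hs)]
      have e1 : Real.cos φ = 2 * Real.cos (φ / 2) ^ 2 - 1 := by
        have h := Real.cos_two_mul (φ / 2); rwa [show 2 * (φ / 2) = φ by ring] at h
      have e2 : Real.sin φ = 2 * Real.sin (φ / 2) * Real.cos (φ / 2) := by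
        have h := Real.sin_two_mul (φ / 2); rwa [show 2 * (φ / 2) = φ by ring] at h
      have e3 := Real.sin_sq_add_cos_sq (φ / 2)
      rw [Real.sin_pi_div_two_sub, Real.cos_pi_div_two_sub]
      have hkey : Real.cos φ * (Real.cos (φ / 2) ^ 2 - Real.sin (φ / 2) ^ 2)
          + Real.sin φ * (2 * (Real.sin (φ / 2) * Real.cos (φ / 2))) = 1 := by
        linear_combination (Real.cos (φ / 2) ^ 2 - Real.sin (φ / 2) ^ 2) * e1
          + (2 * Real.cos (φ / 2) * Real.sin (φ / 2)) * e2
          + (2 * Real.cos (φ / 2) ^ 2 + 1) * e3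
      rw [hkey]; ring
  · obtain ⟨ξ, h1, h2⟩ := hwit 0
    exact le_csInf ⟨_, ξ, h1, rfl⟩ hlb
end
end

section
/- Let n ≥ 1 and let A be an n×n complex matrix such that for every p ∈ (1,∞) and every ξ ∈ ℂⁿ one has Re⟨Aξ, 𝒥_pξ⟩ ≥ 0 (i.e., Δ_p(A) ≥ 0 for all p ∈ (1,∞)). Then A has real entries, i.e., Im A = 0. -/
open scoped BigOperators ComplexConjugate Matrix

noncomputable section

/-- if `Re⟨Aξ,𝒥_pξ⟩ ≥ 0` for every `p ∈ (1,∞)` and every `ξ`, then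
`A` has real entries. -/
theorem statement15 (n : ℕ) (hn : 1 ≤ n) (A : Matrix (Fin n) (Fin n) ℂ)
    (h : ∀ p : ℝ, 1 < p → ∀ ξ : Fin n → ℂ,
      0 ≤ (Paper.herm (A.mulVec ξ) (Paper.Jmap p ξ)).re) :
    ∀ i j, (A i j).im = 0 := by

  -- Step 1: for every ξ, the "imaginary pairing" is nonnegative.
  have step1 : ∀ ξ : Fin n → ℂ, 0 ≤ ∑ m, (A.mulVec ξ m).im * (ξ m).im := by
    intro ξ
    set R : ℝ := ∑ m, (A.mulVec ξ m).re * (ξ m).re with hR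
    set I : ℝ := ∑ m, (A.mulVec ξ m).im * (ξ m).im with hI
    have key : ∀ p : ℝ, 1 < p → 0 ≤ R / p + I * (1 - 1 / p) := by
      intro p hp
      have := h p hp ξ
      have hcalc : (Paper.herm (A.mulVec ξ) (Paper.Jmap p ξ)).re
          = R / p + I * (1 - 1 / p) := by
        simp only [Paper.herm, Paper.Jmap, Complex.re_sum, Complex.mul_re,
          Complex.conj_re, Complex.conj_im, Complex.add_re, Complex.add_im,
          Complex.ofReal_re, Complex.ofReal_im, Complex.mul_im, Complex.I_re,
          Complex.I_im, hR, hI, Finset.sum_div, ← Finset.sum_add_distrib,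
          Finset.sum_mul, ← Finset.sum_sub_distrib]
        apply Finset.sum_congr rfl
        intro m _
        ring
      rw [hcalc] at this
      exact this
    by_contra hneg
    push_neg at hneg
    set p : ℝ := max 2 ((R - I) / (-I) + 1) with hp
    have hp1 : (1 : ℝ) < p := lt_of_lt_of_le one_lt_two (le_max_left _ _)
    have hp0 : (0 : ℝ) < p := lt_trans one_pos hp1
    have hp2 : (R - I) / (-I) + 1 ≤ p := le_max_right _ _
    have hk := key p hp1
    have hIneg : (0 : ℝ) < -I := by linarith
    have hmul : (R - I) / (-I) * (-I) = R - I := div_mul_cancel₀ _ (ne_of_gt hIneg)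
    -- 0 ≤ R/p + I - I/p  ⇒  multiply by p > 0 : 0 ≤ R + I*p - I
    have h2 : 0 ≤ R + I * p - I := by
      have := mul_le_mul_of_nonneg_right hk (le_of_lt hp0)
      have hRp : R / p * p = R := div_mul_cancel₀ _ (ne_of_gt hp0)
      have hIp : I * (1 - 1 / p) * p = I * p - I := by
        field_simp
      nlinarith [this, hRp, hIp]
    nlinarith [mul_le_mul_of_nonneg_right hp2 (le_of_lt hIneg)]
  intro i j
  -- Step 2: plug ξ_k = t·δ_{kj} + i·δ_{ki}
  have main : ∀ t : ℝ, 0 ≤ t * (A i j).im + (A i i).re := by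
    intro t
    have := step1 (fun k => ((t * (if k = j then 1 else 0) : ℝ) : ℂ)
      + Complex.I * ((if k = i then 1 else 0 : ℝ) : ℂ))
    have him : ∀ m, ((fun k => ((t * (if k = j then 1 else 0) : ℝ) : ℂ)
        + Complex.I * ((if k = i then 1 else 0 : ℝ) : ℂ)) m).im
        = (if m = i then 1 else 0) := by
      intro m
      simp [Complex.add_im, Complex.mul_im]
    have hre : ∀ m, ((fun k => ((t * (if k = j then 1 else 0) : ℝ) : ℂ)
        + Complex.I * ((if k = i then 1 else 0 : ℝ) : ℂ)) m).re
        = t * (if m = j then 1 else 0) := by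
      intro m
      simp [Complex.add_re, Complex.mul_re]
    have hmv : ∀ m, (A.mulVec (fun k => ((t * (if k = j then 1 else 0) : ℝ) : ℂ)
        + Complex.I * ((if k = i then 1 else 0 : ℝ) : ℂ)) m).im
        = t * (A m j).im + (A m i).re := by
      intro m
      simp only [Matrix.mulVec, dotProduct, Complex.im_sum, Complex.mul_im]
      rw [Finset.sum_congr rfl (fun k _ => by rw [him k, hre k])]
      have : ∀ k : Fin n, (A m k).re * (if k = i then 1 else 0)
          + (A m k).im * (t * (if k = j then 1 else 0))
          = (if k = i then (A m k).re else 0) + (if k = j then t * (A m k).im else 0) := by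
        intro k
        by_cases h1 : k = i <;> by_cases h2 : k = j <;> simp [h1, h2] <;> ring
      rw [Finset.sum_congr rfl (fun k _ => this k), Finset.sum_add_distrib,
        Finset.sum_ite_eq' _ i, Finset.sum_ite_eq' _ j]
      simp [add_comm]
    calc (0:ℝ) ≤ _ := this
      _ = t * (A i j).im + (A i i).re := by
          rw [Finset.sum_congr rfl (fun m _ => by rw [him m, hmv m])]
          rw [Finset.sum_congr rfl (fun m (_ : m ∈ Finset.univ) => by
            rw [mul_ite, mul_one, mul_zero])]
          rw [Finset.sum_ite_eq' _ i]
          simp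
  by_contra hc
  have ht := main (-((A i i).re + 1) / (A i j).im)
  rw [div_mul_cancel₀ _ hc] at ht
  linarith
end
end

section
/- Let p ≥ 2 with conjugate exponent q = p/(p−1), let δ > 0, and let Q = Q_{p,δ} be the Nazarov–Treil Bellman function. Then: (a) 0 ≤ Q(ζ,η) ≤ (1+δ)·(|ζ|^p + |η|^q) for all ζ, η ∈ ℂ; (b) Q is real-Fréchet differentiable at every point of ℂ×ℂ (ℂ×ℂ viewed as a four-dimensional real vector space), and for all ζ, η ∈ ℂ the partial Fréchet derivatives satisfy ‖D_ζQ(ζ,η)‖ ≤ (p + 2δ)·max{ |ζ|^{p−1}, |η| } and ‖D_ηQ(ζ,η)‖ ≤ (q + (2−q)δ)·|η|^{q−1}, where D_ζQ(ζ,η) is the real Fréchet derivative of ζ' ↦ Q(ζ',η) at ζ (an ℝ-linear functional on ℂ ≅ ℝ²), D_ηQ(ζ,η) is defined analogously, and ‖·‖ is the operator norm. -/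
open scoped BigOperators ComplexConjugate Matrix

noncomputable section

namespace S17
open Asymptotics


noncomputable def pairCLM (w : ℂ) : ℂ →L[ℝ] ℝ := w.re • Complex.reCLM + w.im • Complex.imCLM

@[simp] lemma pairCLM_apply (w h : ℂ) : pairCLM w h = w.re * h.re + w.im * h.im := by
  simp [pairCLM, smul_eq_mul]

lemma pairCLM_zero : pairCLM 0 = 0 := by
  ext h; simp

lemma norm_pairCLM_le (w : ℂ) : ‖pairCLM w‖ ≤ ‖w‖ := by
  refine ContinuousLinearMap.opNorm_le_bound _ (norm_nonneg w) fun h => ?_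
  have h1 : pairCLM w h = (w * (starRingEnd ℂ) h).re := by
    simp [Complex.mul_re]
  rw [h1, Real.norm_eq_abs]
  calc |(w * (starRingEnd ℂ) h).re| ≤ ‖w * (starRingEnd ℂ) h‖ :=
        Complex.abs_re_le_norm _
    _ = ‖w‖ * ‖h‖ := by
        rw [norm_mul, Complex.norm_conj]

lemma hasFDerivAt_normSq (z : ℂ) :
    HasFDerivAt Complex.normSq (pairCLM (2 * z)) z := by
  have hre : HasFDerivAt (fun w : ℂ => w.re) Complex.reCLM z := Complex.reCLM.hasFDerivAt
  have him : HasFDerivAt (fun w : ℂ => w.im) Complex.imCLM z := Complex.imCLM.hasFDerivAt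
  have h := ((hre.mul hre).add (him.mul him))
  have hfun : Complex.normSq = fun w : ℂ => w.re * w.re + w.im * w.im := by
    funext w; simp [Complex.normSq_apply]
  rw [hfun]
  refine h.congr_fderiv ?_
  ext h'
  simp [Complex.mul_re, smul_eq_mul]
  ring

noncomputable def Lr (r : ℝ) (z : ℂ) : ℂ →L[ℝ] ℝ :=
  (r * ‖z‖ ^ (r - 2)) • pairCLM z

lemma Lr_zero (r : ℝ) : Lr r 0 = 0 := by
  rw [Lr, pairCLM_zero, smul_zero]

lemma F_eq (r : ℝ) (z : ℂ) : ‖z‖ ^ r = Complex.normSq z ^ (r / 2) := by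
  rw [Complex.normSq_eq_norm_sq, ← Real.rpow_natCast (‖z‖) 2,
    ← Real.rpow_mul (norm_nonneg z)]
  congr 1
  ring

lemma normSq_rpow (a : ℝ) (z : ℂ) : Complex.normSq z ^ a = ‖z‖ ^ (2 * a) := by
  rw [Complex.normSq_eq_norm_sq, ← Real.rpow_natCast (‖z‖) 2,
    ← Real.rpow_mul (norm_nonneg z)]
  norm_num

lemma norm_Lr_le {r : ℝ} (hr : 0 ≤ r) (z : ℂ) : ‖Lr r z‖ ≤ r * ‖z‖ ^ (r - 1) := by
  rcases eq_or_ne z 0 with rfl | hz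
  · rw [Lr_zero, norm_zero]
    positivity
  · have habs : (0:ℝ) < ‖z‖ := norm_pos_iff.mpr hz
    rw [Lr]
    refine le_trans (ContinuousLinearMap.opNorm_smul_le _ _) ?_
    calc ‖r * ‖z‖ ^ (r - 2)‖ * ‖pairCLM z‖
        ≤ (r * ‖z‖ ^ (r - 2)) * ‖z‖ := by
          rw [Real.norm_eq_abs, abs_of_nonneg (by positivity)]
          apply mul_le_mul_of_nonneg_left (norm_pairCLM_le z) (by positivity)
      _ = r * ‖z‖ ^ (r - 1) := by
          rw [mul_assoc, ← Real.rpow_add_one (ne_of_gt habs)]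
          ring_nf

lemma hasFDerivAt_abs_rpow (r : ℝ) {z : ℂ} (h : z ≠ 0 ∨ 1 < r) :
    HasFDerivAt (fun w : ℂ => ‖w‖ ^ r) (Lr r z) z := by
  have hfun : (fun w : ℂ => ‖w‖ ^ r) = fun w => Complex.normSq w ^ (r / 2) := by
    funext w; exact F_eq r w
  rcases eq_or_ne z 0 with rfl | hz
  · have hr : 1 < r := h.resolve_left (by simp)
    rw [hasFDerivAt_iff_isLittleO_nhds_zero]
    have h0 : ‖(0:ℂ)‖ ^ r = 0 := by
      rw [norm_zero, Real.zero_rpow (by linarith)]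
    simp only [zero_add, Lr_zero, ContinuousLinearMap.zero_apply, h0, sub_zero]
    rw [Asymptotics.isLittleO_iff]
    intro c hc
    have htend : Filter.Tendsto (fun v : ℂ => ‖v‖ ^ (r - 1)) (nhds 0) (nhds 0) := by
      have hn : Filter.Tendsto (fun v : ℂ => ‖v‖) (nhds 0) (nhds 0) := by
        simpa using (continuous_norm (E := ℂ)).tendsto (0 : ℂ)
      have h2 : Filter.Tendsto (fun x : ℝ => x ^ (r - 1)) (nhds 0) (nhds (0 ^ (r - 1))) :=
        (Real.continuousAt_rpow_const 0 (r - 1) (Or.inr (by linarith))).tendsto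
      rw [Real.zero_rpow (by linarith)] at h2
      exact h2.comp hn
    filter_upwards [htend.eventually (gt_mem_nhds hc)] with v hv
    rcases eq_or_ne v 0 with rfl | hv0
    · simp [Real.zero_rpow (show r ≠ 0 by linarith)]
    · have habs : (0:ℝ) < ‖v‖ := norm_pos_iff.mpr hv0
      rw [Real.norm_eq_abs, abs_of_nonneg (by positivity)]
      calc ‖v‖ ^ r = ‖v‖ ^ (r - 1) * ‖v‖ := by
            rw [← Real.rpow_add_one (ne_of_gt habs)]; ring_nf
        _ ≤ c * ‖v‖ := by
            apply mul_le_mul_of_nonneg_right (le_of_lt hv) (le_of_lt habs)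
  · have hs : Complex.normSq z ≠ 0 := by
      simpa [Complex.normSq_eq_zero] using hz
    have h1 : HasDerivAt (fun x : ℝ => x ^ (r / 2)) (r / 2 * Complex.normSq z ^ (r / 2 - 1))
        (Complex.normSq z) := Real.hasDerivAt_rpow_const (Or.inl hs)
    have h2 := h1.comp_hasFDerivAt z (hasFDerivAt_normSq z)
    rw [hfun]
    refine h2.congr_fderiv ?_
    symm
    ext w
    rw [Lr]
    simp only [ContinuousLinearMap.smul_apply, pairCLM_apply, smul_eq_mul, Complex.mul_re,
      Complex.mul_im]
    rw [normSq_rpow]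
    have heq : ‖z‖ ^ (r - 2) = ‖z‖ ^ (2 * (r / 2 - 1)) := by ring_nf
    rw [heq]
    simp [Complex.ofReal_re]
    ring


noncomputable section

def Qif (p q δ : ℝ) (v : ℂ × ℂ) : ℝ :=
  ‖v.1‖ ^ p + ‖v.2‖ ^ q +
    δ * (‖v.1‖ ^ (2:ℝ) * ‖v.2‖ ^ (2 - q))

def Qelse (p q δ : ℝ) (v : ℂ × ℂ) : ℝ :=
  (1 + δ * (2 / p)) * ‖v.1‖ ^ p + (1 + δ * (2 / q - 1)) * ‖v.2‖ ^ q

lemma QNT_eq (p q δ : ℝ) (v : ℂ × ℂ) :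
    Paper.QNT p q δ v.1 v.2 =
      if ‖v.1‖ ^ p ≤ ‖v.2‖ ^ q then Qif p q δ v else Qelse p q δ v := by
  unfold Paper.QNT Qif Qelse
  split_ifs <;> ring

def LzIf (p q δ : ℝ) (v : ℂ × ℂ) : ℂ →L[ℝ] ℝ :=
  Lr p v.1 + (δ * ‖v.2‖ ^ (2 - q)) • Lr 2 v.1
def LeIf (p q δ : ℝ) (v : ℂ × ℂ) : ℂ →L[ℝ] ℝ :=
  Lr q v.2 + (δ * ‖v.1‖ ^ (2:ℝ)) • Lr (2 - q) v.2
def LzElse (p q δ : ℝ) (v : ℂ × ℂ) : ℂ →L[ℝ] ℝ := (1 + δ * (2 / p)) • Lr p v.1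
def LeElse (p q δ : ℝ) (v : ℂ × ℂ) : ℂ →L[ℝ] ℝ := (1 + δ * (2 / q - 1)) • Lr q v.2

lemma hasFDerivAt_Qif (p q δ : ℝ) (hp : 1 < p) (hq1 : 1 < q) {v : ℂ × ℂ} (hv : v.2 ≠ 0) :
    HasFDerivAt (Qif p q δ)
      ((LzIf p q δ v).comp (ContinuousLinearMap.fst ℝ ℂ ℂ) +
        (LeIf p q δ v).comp (ContinuousLinearMap.snd ℝ ℂ ℂ)) v := by
  have h1 : HasFDerivAt (fun v : ℂ × ℂ => ‖v.1‖ ^ p)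
      ((Lr p v.1).comp (ContinuousLinearMap.fst ℝ ℂ ℂ)) v :=
    (hasFDerivAt_abs_rpow p (Or.inr hp)).comp v hasFDerivAt_fst
  have h2 : HasFDerivAt (fun v : ℂ × ℂ => ‖v.2‖ ^ q)
      ((Lr q v.2).comp (ContinuousLinearMap.snd ℝ ℂ ℂ)) v :=
    (hasFDerivAt_abs_rpow q (Or.inr hq1)).comp v hasFDerivAt_snd
  have h3 : HasFDerivAt (fun v : ℂ × ℂ => ‖v.1‖ ^ (2:ℝ))
      ((Lr 2 v.1).comp (ContinuousLinearMap.fst ℝ ℂ ℂ)) v :=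
    (hasFDerivAt_abs_rpow 2 (Or.inr one_lt_two)).comp v hasFDerivAt_fst
  have h4 : HasFDerivAt (fun v : ℂ × ℂ => ‖v.2‖ ^ (2 - q))
      ((Lr (2 - q) v.2).comp (ContinuousLinearMap.snd ℝ ℂ ℂ)) v :=
    (hasFDerivAt_abs_rpow (2 - q) (Or.inl hv)).comp v hasFDerivAt_snd
  have h := (h1.add h2).add ((h3.mul h4).const_mul δ)
  have hL : (LzIf p q δ v).comp (ContinuousLinearMap.fst ℝ ℂ ℂ) +
      (LeIf p q δ v).comp (ContinuousLinearMap.snd ℝ ℂ ℂ) =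
      (Lr p v.1).comp (ContinuousLinearMap.fst ℝ ℂ ℂ) +
        (Lr q v.2).comp (ContinuousLinearMap.snd ℝ ℂ ℂ) +
        δ • (‖v.1‖ ^ (2:ℝ) • (Lr (2 - q) v.2).comp (ContinuousLinearMap.snd ℝ ℂ ℂ) +
          ‖v.2‖ ^ (2 - q) • (Lr 2 v.1).comp (ContinuousLinearMap.fst ℝ ℂ ℂ)) := by
    refine ContinuousLinearMap.ext fun w => ?_
    simp only [LzIf, LeIf, Lr, ContinuousLinearMap.add_apply, ContinuousLinearMap.comp_apply,
      ContinuousLinearMap.coe_fst', ContinuousLinearMap.coe_snd', ContinuousLinearMap.smul_apply,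
      pairCLM_apply, smul_eq_mul]
    all_goals ring
  rw [hL]
  exact h

lemma hasFDerivAt_Qelse (p q δ : ℝ) (hp : 1 < p) (hq1 : 1 < q) (v : ℂ × ℂ) :
    HasFDerivAt (Qelse p q δ)
      ((LzElse p q δ v).comp (ContinuousLinearMap.fst ℝ ℂ ℂ) +
        (LeElse p q δ v).comp (ContinuousLinearMap.snd ℝ ℂ ℂ)) v := by
  have h1 : HasFDerivAt (fun v : ℂ × ℂ => ‖v.1‖ ^ p)
      ((Lr p v.1).comp (ContinuousLinearMap.fst ℝ ℂ ℂ)) v :=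
    (hasFDerivAt_abs_rpow p (Or.inr hp)).comp v hasFDerivAt_fst
  have h2 : HasFDerivAt (fun v : ℂ × ℂ => ‖v.2‖ ^ q)
      ((Lr q v.2).comp (ContinuousLinearMap.snd ℝ ℂ ℂ)) v :=
    (hasFDerivAt_abs_rpow q (Or.inr hq1)).comp v hasFDerivAt_snd
  have h := (h1.const_mul (1 + δ * (2 / p))).add (h2.const_mul (1 + δ * (2 / q - 1)))
  have hL : (LzElse p q δ v).comp (ContinuousLinearMap.fst ℝ ℂ ℂ) +
      (LeElse p q δ v).comp (ContinuousLinearMap.snd ℝ ℂ ℂ) =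
      (1 + δ * (2 / p)) • (Lr p v.1).comp (ContinuousLinearMap.fst ℝ ℂ ℂ) +
        (1 + δ * (2 / q - 1)) • (Lr q v.2).comp (ContinuousLinearMap.snd ℝ ℂ ℂ) := by
    refine ContinuousLinearMap.ext fun w => ?_
    simp only [LzElse, LeElse, Lr, ContinuousLinearMap.add_apply, ContinuousLinearMap.comp_apply,
      ContinuousLinearMap.coe_fst', ContinuousLinearMap.coe_snd', ContinuousLinearMap.smul_apply,
      pairCLM_apply, smul_eq_mul]
    all_goals ring
  rw [hL]
  exact h

lemma glue {E : Type*} [NormedAddCommGroup E] [NormedSpace ℝ E]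
    {f f₁ f₂ : E → ℝ} {L : E →L[ℝ] ℝ} {v : E}
    (h₁ : HasFDerivAt f₁ L v) (h₂ : HasFDerivAt f₂ L v) (he : f₁ v = f₂ v)
    (hv : f v = f₁ v) (hmem : ∀ x, f x = f₁ x ∨ f x = f₂ x) :
    HasFDerivAt f L v := by
  rw [hasFDerivAt_iff_isLittleO_nhds_zero] at h₁ h₂ ⊢
  have hb : (fun h => f (v + h) - f v - L h) =O[nhds 0]
      fun h => |f₁ (v + h) - f₁ v - L h| + |f₂ (v + h) - f₂ v - L h| := by
    apply Asymptotics.isBigO_of_le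
    intro h
    have e1 : (0:ℝ) ≤ |f₁ (v + h) - f₁ v - L h| := abs_nonneg _
    have e2 : (0:ℝ) ≤ |f₂ (v + h) - f₂ v - L h| := abs_nonneg _
    rw [Real.norm_eq_abs, Real.norm_eq_abs, abs_of_nonneg (add_nonneg e1 e2)]
    rcases hmem (v + h) with h' | h'
    · have hgoal : f (v + h) - f v - L h = f₁ (v + h) - f₁ v - L h := by rw [h', hv]
      rw [hgoal]
      have ha := le_abs_self (f₁ (v + h) - f₁ v - L h)
      have hb := neg_abs_le (f₁ (v + h) - f₁ v - L h)
      rw [abs_le]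
      exact ⟨by linarith, by linarith⟩
    · have hgoal : f (v + h) - f v - L h = f₂ (v + h) - f₂ v - L h := by rw [h', hv, he]
      rw [hgoal]
      have ha := le_abs_self (f₂ (v + h) - f₂ v - L h)
      have hb := neg_abs_le (f₂ (v + h) - f₂ v - L h)
      rw [abs_le]
      exact ⟨by linarith, by linarith⟩
  exact hb.trans_isLittleO ((isLittleO_abs_left.2 h₁).add (isLittleO_abs_left.2 h₂))


lemma key_le {p q s t : ℝ} (hp0 : 0 < p) (hqp : q * p⁻¹ = q - 1) (hs0 : 0 ≤ s) (ht0 : 0 ≤ t)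
    (h : s ^ p ≤ t ^ q) : s ≤ t ^ (q - 1) := by
  have h1 : s = (s ^ p) ^ p⁻¹ := (Real.rpow_rpow_inv hs0 (ne_of_gt hp0)).symm
  rw [h1]
  calc (s ^ p) ^ p⁻¹ ≤ (t ^ q) ^ p⁻¹ :=
        Real.rpow_le_rpow (Real.rpow_nonneg hs0 p) h (inv_nonneg.2 hp0.le)
    _ = t ^ (q - 1) := by rw [← Real.rpow_mul ht0, hqp]

lemma boundsA (p q δ : ℝ) (hp : 2 ≤ p) (hq : q = p / (p - 1)) (hδ : 0 < δ) (ζ η : ℂ) :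
    0 ≤ Paper.QNT p q δ ζ η ∧
      Paper.QNT p q δ ζ η ≤ (1 + δ) * (‖ζ‖ ^ p + ‖η‖ ^ q) := by
  have hp0 : (0:ℝ) < p := by linarith
  have hpm1 : (0:ℝ) < p - 1 := by linarith
  have hp' : p ≠ 0 := ne_of_gt hp0
  have hpm1' : p - 1 ≠ 0 := ne_of_gt hpm1
  have hq1 : 1 < q := by rw [hq, lt_div_iff₀ hpm1]; linarith
  have hq2 : q ≤ 2 := by rw [hq, div_le_iff₀ hpm1]; linarith
  have hq0 : (0:ℝ) < q := by linarith
  have hqp : q * p⁻¹ = q - 1 := by rw [hq]; field_simp; ring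
  set s := ‖ζ‖ with hsdef
  set t := ‖η‖ with htdef
  have hs0 : 0 ≤ s := norm_nonneg ζ
  have ht0 : 0 ≤ t := norm_nonneg η
  have hsp : 0 ≤ s ^ p := Real.rpow_nonneg hs0 p
  have htq : 0 ≤ t ^ q := Real.rpow_nonneg ht0 q
  have hc1 : (0:ℝ) ≤ 2 / p := by positivity
  have hc1' : 2 / p ≤ 1 := by rw [div_le_one hp0]; linarith
  have hc2 : (0:ℝ) ≤ 2 / q - 1 := by
    have : 1 ≤ 2 / q := (one_le_div hq0).mpr hq2
    linarith
  have hc2' : 2 / q - 1 ≤ 1 := by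
    have h1q : 1 ≤ q := hq1.le
    have h2q : 2 / q ≤ 2 := by rw [div_le_iff₀ hq0]; linarith
    linarith
  unfold Paper.QNT
  rw [← hsdef, ← htdef]
  split_ifs with hcond
  · have hs2 : 0 ≤ s ^ (2:ℝ) := Real.rpow_nonneg hs0 _
    have ht2q : 0 ≤ t ^ (2 - q) := Real.rpow_nonneg ht0 _
    have key : s ^ (2:ℝ) * t ^ (2 - q) ≤ t ^ q := by
      rcases eq_or_lt_of_le ht0 with ht' | ht'
      · have htq0 : t ^ q = 0 := by rw [← ht', Real.zero_rpow (ne_of_gt hq0)]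
        have hsp0 : s ^ p = 0 := le_antisymm (htq0 ▸ hcond) hsp
        have hszero : s = 0 := by
          by_contra hs'
          have hpos : 0 < s := lt_of_le_of_ne hs0 (Ne.symm hs')
          exact absurd hsp0 (ne_of_gt (Real.rpow_pos_of_pos hpos p))
        rw [hszero, Real.zero_rpow (by norm_num : (2:ℝ) ≠ 0), zero_mul, htq0]
      · have hsle : s ≤ t ^ (q - 1) := key_le hp0 hqp hs0 ht0 hcond
        have h2 : s ^ (2:ℝ) ≤ (t ^ (q-1)) ^ (2:ℝ) :=
          Real.rpow_le_rpow hs0 hsle (by norm_num)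
        have h3 : (t ^ (q-1)) ^ (2:ℝ) = t ^ (2*(q-1)) := by
          rw [← Real.rpow_mul ht0]; congr 1; ring
        calc s ^ (2:ℝ) * t ^ (2 - q) ≤ t ^ (2*(q-1)) * t ^ (2 - q) := by
              apply mul_le_mul_of_nonneg_right _ ht2q
              rw [← h3]; exact h2
          _ = t ^ q := by rw [← Real.rpow_add ht']; congr 1; ring
    constructor
    · have := mul_nonneg hs2 ht2q
      nlinarith
    · nlinarith
  · have hb : 0 ≤ 2 / p * s ^ p + (2 / q - 1) * t ^ q :=
      add_nonneg (mul_nonneg hc1 hsp) (mul_nonneg hc2 htq)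
    constructor
    · nlinarith
    · have hle : 2 / p * s ^ p + (2 / q - 1) * t ^ q ≤ s ^ p + t ^ q := by nlinarith
      nlinarith

lemma boundary_eq (p q δ : ℝ) (hp0 : 0 < p) (hq0 : 0 < q) (hpq : p * q = p + q)
    (hqp : q * p⁻¹ = q - 1)
    {v : ℂ × ℂ} (hv : v.2 ≠ 0) (hb : ‖v.1‖ ^ p = ‖v.2‖ ^ q) :
    LzIf p q δ v = LzElse p q δ v ∧ LeIf p q δ v = LeElse p q δ v ∧
      Qif p q δ v = Qelse p q δ v := by
  have hp' : p ≠ 0 := ne_of_gt hp0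
  have hq' : q ≠ 0 := ne_of_gt hq0
  set s := ‖v.1‖ with hsdef
  set t := ‖v.2‖ with htdef
  have ht : (0:ℝ) < t := norm_pos_iff.mpr hv
  have hs : (0:ℝ) < s := by
    by_contra h
    push_neg at h
    have hs0 : s = 0 := le_antisymm h (norm_nonneg _)
    rw [hs0, Real.zero_rpow (ne_of_gt hp0)] at hb
    exact absurd hb.symm (ne_of_gt (Real.rpow_pos_of_pos ht q))
  have hst : s = t ^ (q - 1) := by
    have h1 : s = (s ^ p) ^ p⁻¹ := (Real.rpow_rpow_inv hs.le (ne_of_gt hp0)).symm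
    rw [h1, hb, ← Real.rpow_mul ht.le, hqp]
  have hpow : ∀ a : ℝ, s ^ a = t ^ ((q - 1) * a) := by
    intro a
    rw [hst, ← Real.rpow_mul ht.le]
  have k1 : s ^ (p - 2) = t ^ (2 - q) := by
    rw [hpow]; congr 1; linear_combination hpq
  have k2 : s ^ (2:ℝ) = t ^ (2*q - 2) := by
    rw [hpow]; congr 1; ring
  have h22 : s ^ ((2:ℝ) - 2) = 1 := by
    rw [show (2:ℝ) - 2 = 0 from by norm_num, Real.rpow_zero]
  refine ⟨?_, ?_, ?_⟩
  · unfold LzIf LzElse Lr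
    rw [smul_smul, smul_smul, ← add_smul]
    congr 1
    rw [← hsdef, ← htdef, h22]
    have hc : (1 + δ * (2/p)) * p = p + 2*δ := by field_simp
    linear_combination (-2*δ) * k1 + (-(s ^ (p-2))) * hc
  · unfold LeIf LeElse Lr
    rw [smul_smul, smul_smul, ← add_smul]
    congr 1
    rw [← hsdef, ← htdef]
    have hA : s ^ (2:ℝ) * t ^ (2 - q - 2) = t ^ (q - 2) := by
      rw [k2, ← Real.rpow_add ht]; congr 1 <;> ring
    have hc : (1 + δ * (2/q - 1)) * q = q + δ*(2-q) := by field_simp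
    linear_combination (δ*(2-q)) * hA + (-(t ^ (q-2))) * hc
  · unfold Qif Qelse
    rw [← hsdef, ← htdef]
    have h2 : s ^ (2:ℝ) * t ^ (2 - q) = t ^ q := by
      rw [k2, ← Real.rpow_add ht]; congr 1; ring
    rw [h2, hb]
    have hcoef : 2/p + 2/q - 1 = 1 := by
      field_simp
      linear_combination (-2:ℝ) * hpq
    linear_combination (-(δ * t ^ q)) * hcoef

lemma isLittleO_rpow_norm {E : Type*} [NormedAddCommGroup E] {r : ℝ} (hr : 1 < r) :
    (fun v : E => ‖v‖ ^ r) =o[nhds 0] fun v : E => v := by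
  rw [Asymptotics.isLittleO_iff]
  intro c hc
  have htend : Filter.Tendsto (fun v : E => ‖v‖ ^ (r - 1)) (nhds 0) (nhds 0) := by
    have hn : Filter.Tendsto (fun v : E => ‖v‖) (nhds 0) (nhds 0) := by
      simpa using (continuous_norm (E := E)).tendsto (0 : E)
    have h2 : Filter.Tendsto (fun x : ℝ => x ^ (r - 1)) (nhds 0) (nhds (0 ^ (r - 1))) :=
      (Real.continuousAt_rpow_const 0 (r - 1) (Or.inr (by linarith))).tendsto
    rw [Real.zero_rpow (by linarith)] at h2
    exact h2.comp hn
  filter_upwards [htend.eventually (gt_mem_nhds hc)] with v hv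
  rcases eq_or_ne v 0 with rfl | hv0
  · simp [Real.zero_rpow (show r ≠ 0 by linarith)]
  · have hn : (0:ℝ) < ‖v‖ := norm_pos_iff.2 hv0
    rw [Real.norm_eq_abs, abs_of_nonneg (by positivity)]
    calc ‖v‖ ^ r = ‖v‖ ^ (r - 1) * ‖v‖ := by
          rw [← Real.rpow_add_one (ne_of_gt hn)]; ring_nf
      _ ≤ c * ‖v‖ := mul_le_mul_of_nonneg_right (le_of_lt hv) hn.le

set_option maxHeartbeats 2000000 in
lemma main (p q δ : ℝ) (hp : 2 ≤ p) (hq : q = p / (p - 1)) (hδ : 0 < δ) (v : ℂ × ℂ) :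
    ∃ Lz Le : ℂ →L[ℝ] ℝ,
      HasFDerivAt (fun w : ℂ × ℂ => Paper.QNT p q δ w.1 w.2)
        (Lz.comp (ContinuousLinearMap.fst ℝ ℂ ℂ) + Le.comp (ContinuousLinearMap.snd ℝ ℂ ℂ)) v ∧
      ‖Lz‖ ≤ (p + 2 * δ) * max (‖v.1‖ ^ (p - 1)) (‖v.2‖) ∧
      ‖Le‖ ≤ (q + (2 - q) * δ) * ‖v.2‖ ^ (q - 1) := by
  have hp0 : (0:ℝ) < p := by linarith
  have hp1 : (1:ℝ) < p := by linarith
  have hpm1 : (0:ℝ) < p - 1 := by linarith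
  have hp' : p ≠ 0 := ne_of_gt hp0
  have hpm1' : p - 1 ≠ 0 := ne_of_gt hpm1
  have hq1 : 1 < q := by rw [hq, lt_div_iff₀ hpm1]; linarith
  have hq2 : q ≤ 2 := by rw [hq, div_le_iff₀ hpm1]; linarith
  have hq0 : (0:ℝ) < q := by linarith
  have hq' : q ≠ 0 := ne_of_gt hq0
  have hpq : p * q = p + q := by rw [hq]; field_simp; ring
  have hqp : q * p⁻¹ = q - 1 := by rw [hq]; field_simp; ring
  set s := ‖v.1‖ with hsdef
  set t := ‖v.2‖ with htdef
  have hs0 : 0 ≤ s := norm_nonneg v.1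
  have ht0 : 0 ≤ t := norm_nonneg v.2
  have hcont1 : ContinuousAt (fun w : ℂ × ℂ => ‖w.1‖ ^ p) v :=
    ((continuous_norm.comp continuous_fst).continuousAt).rpow_const (Or.inr hp0.le)
  have hcont2 : ContinuousAt (fun w : ℂ × ℂ => ‖w.2‖ ^ q) v :=
    ((continuous_norm.comp continuous_snd).continuousAt).rpow_const (Or.inr hq0.le)
  have hbz_else : ‖LzElse p q δ v‖ ≤ (p + 2*δ) * max (s ^ (p-1)) t := by
    unfold LzElse
    refine le_trans (ContinuousLinearMap.opNorm_smul_le _ _) ?_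
    rw [Real.norm_eq_abs, abs_of_nonneg (by positivity)]
    calc (1 + δ * (2/p)) * ‖Lr p v.1‖ ≤ (1 + δ * (2/p)) * (p * s ^ (p-1)) :=
          mul_le_mul_of_nonneg_left (norm_Lr_le hp0.le v.1) (by positivity)
      _ = (p + 2*δ) * s ^ (p-1) := by field_simp
      _ ≤ (p + 2*δ) * max (s ^ (p-1)) t :=
          mul_le_mul_of_nonneg_left (le_max_left _ _) (by positivity)
  have hbe_else : ‖LeElse p q δ v‖ ≤ (q + (2-q)*δ) * t ^ (q-1) := by
    unfold LeElse
    refine le_trans (ContinuousLinearMap.opNorm_smul_le _ _) ?_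
    have hcnn : (0:ℝ) ≤ 1 + δ * (2/q - 1) := by
      have : 1 ≤ 2 / q := (one_le_div hq0).mpr hq2
      nlinarith
    rw [Real.norm_eq_abs, abs_of_nonneg hcnn]
    calc (1 + δ * (2/q - 1)) * ‖Lr q v.2‖ ≤ (1 + δ * (2/q - 1)) * (q * t ^ (q-1)) :=
          mul_le_mul_of_nonneg_left (norm_Lr_le hq0.le v.2) hcnn
      _ = (q + (2-q)*δ) * t ^ (q-1) := by field_simp
  rcases lt_trichotomy (s ^ p) (t ^ q) with hlt | heq | hgt
  · -- strict if region
    have hv2 : v.2 ≠ 0 := by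
      intro h0
      rw [htdef, h0] at hlt
      simp only [norm_zero] at hlt
      rw [Real.zero_rpow (ne_of_gt hq0)] at hlt
      exact absurd hlt (not_lt.2 (Real.rpow_nonneg hs0 p))
    have ht : (0:ℝ) < t := norm_pos_iff.mpr hv2
    have hsle : s ≤ t ^ (q - 1) := key_le hp0 hqp hs0 ht0 hlt.le
    refine ⟨LzIf p q δ v, LeIf p q δ v, ?_, ?_, ?_⟩
    · refine (hasFDerivAt_Qif p q δ hp1 hq1 hv2).congr_of_eventuallyEq ?_
      filter_upwards [hcont1.eventually_lt hcont2 hlt] with w hw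
      rw [QNT_eq, if_pos hw.le]
    · unfold LzIf
      refine le_trans (norm_add_le _ _) ?_
      have h1 : ‖Lr p v.1‖ ≤ p * s ^ (p-1) := norm_Lr_le hp0.le v.1
      have h2 : ‖(δ * t ^ (2 - q)) • Lr 2 v.1‖ ≤ 2 * δ * t := by
        refine le_trans (ContinuousLinearMap.opNorm_smul_le _ _) ?_
        rw [Real.norm_eq_abs, abs_of_nonneg (by positivity)]
        calc δ * t ^ (2-q) * ‖Lr 2 v.1‖ ≤ δ * t ^ (2-q) * (2 * s ^ ((2:ℝ)-1)) :=
              mul_le_mul_of_nonneg_left (norm_Lr_le (by norm_num) v.1) (by positivity)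
          _ = 2 * δ * (t ^ (2-q) * s) := by
              rw [show (2:ℝ) - 1 = 1 from by norm_num, Real.rpow_one]; ring
          _ ≤ 2 * δ * (t ^ (2-q) * t ^ (q-1)) := by
              apply mul_le_mul_of_nonneg_left _ (by positivity)
              exact mul_le_mul_of_nonneg_left hsle (Real.rpow_nonneg ht0 _)
          _ = 2 * δ * t := by
              rw [← Real.rpow_add ht]
              norm_num
      have hs1 : s ^ (p-1) ≤ max (s ^ (p-1)) t := le_max_left _ _
      have ht1 : t ≤ max (s ^ (p-1)) t := le_max_right _ _
      have e1 : p * s ^ (p-1) ≤ p * max (s ^ (p-1)) t :=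
        mul_le_mul_of_nonneg_left hs1 hp0.le
      have e2 : 2*δ*t ≤ 2*δ* max (s ^ (p-1)) t :=
        mul_le_mul_of_nonneg_left ht1 (by positivity)
      have : (p + 2*δ) * max (s ^ (p-1)) t = p * max (s ^ (p-1)) t + 2*δ* max (s ^ (p-1)) t := by
        ring
      linarith
    · unfold LeIf
      refine le_trans (norm_add_le _ _) ?_
      have h1 : ‖Lr q v.2‖ ≤ q * t ^ (q-1) := norm_Lr_le hq0.le v.2
      have h2 : ‖(δ * s ^ (2:ℝ)) • Lr (2 - q) v.2‖ ≤ (2-q) * δ * t ^ (q-1) := by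
        refine le_trans (ContinuousLinearMap.opNorm_smul_le _ _) ?_
        rw [Real.norm_eq_abs, abs_of_nonneg (by positivity)]
        calc δ * s ^ (2:ℝ) * ‖Lr (2-q) v.2‖
            ≤ δ * s ^ (2:ℝ) * ((2-q) * t ^ (2-q-1)) :=
              mul_le_mul_of_nonneg_left (norm_Lr_le (by linarith) v.2)
                (mul_nonneg hδ.le (Real.rpow_nonneg hs0 _))
          _ ≤ δ * (t ^ (q-1)) ^ (2:ℝ) * ((2-q) * t ^ (2-q-1)) := by
              apply mul_le_mul_of_nonneg_right _
                (mul_nonneg (by linarith : (0:ℝ) ≤ 2-q) (Real.rpow_nonneg ht0 _))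
              apply mul_le_mul_of_nonneg_left _ hδ.le
              exact Real.rpow_le_rpow hs0 hsle (by norm_num)
          _ = (2-q) * δ * t ^ (q-1) := by
              rw [show ((t ^ (q-1:ℝ)) ^ (2:ℝ)) = t ^ (2*(q-1)) from by
                rw [← Real.rpow_mul ht0]; ring_nf]
              rw [show δ * t ^ (2*(q-1)) * ((2-q) * t ^ (2-q-1)) =
                (2-q) * δ * (t ^ (2*(q-1)) * t ^ (2-q-1)) from by ring,
                ← Real.rpow_add ht]
              congr 2
              ring
      have : (q + (2-q)*δ) * t ^ (q-1) = q * t ^ (q-1) + (2-q)*δ* t ^ (q-1) := by ring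
      linarith
  · -- boundary
    rcases eq_or_ne v.2 0 with hv2 | hv2
    · -- origin
      have ht' : t = 0 := by rw [htdef, hv2, norm_zero]
      have hs' : s = 0 := by
        have htq0 : t ^ q = 0 := by rw [ht', Real.zero_rpow (ne_of_gt hq0)]
        rw [htq0] at heq
        by_contra hs'
        have hpos : 0 < s := lt_of_le_of_ne hs0 (Ne.symm hs')
        exact absurd heq (ne_of_gt (Real.rpow_pos_of_pos hpos p))
      have hv1 : v.1 = 0 := by
        rw [hsdef] at hs'
        exact norm_eq_zero.mp hs'
      have hv0 : v = 0 := Prod.ext hv1 hv2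
      refine ⟨0, 0, ?_, ?_, ?_⟩
      · have hzero : (0:ℂ →L[ℝ] ℝ).comp (ContinuousLinearMap.fst ℝ ℂ ℂ) +
            (0:ℂ →L[ℝ] ℝ).comp (ContinuousLinearMap.snd ℝ ℂ ℂ) = 0 := by
          refine ContinuousLinearMap.ext fun w => ?_
          simp
        rw [hzero, hv0]
        rw [hasFDerivAt_iff_isLittleO_nhds_zero]
        have hQ0 : Paper.QNT p q δ (0:ℂ) (0:ℂ) = 0 := by
          unfold Paper.QNT
          simp only [norm_zero]
          rw [Real.zero_rpow (ne_of_gt hp0), Real.zero_rpow (ne_of_gt hq0)]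
          rw [if_pos le_rfl, Real.zero_rpow (by norm_num : (2:ℝ) ≠ 0)]
          ring
        have hbig : (fun h : ℂ × ℂ => Paper.QNT p q δ ((0:ℂ × ℂ) + h).1 ((0:ℂ × ℂ) + h).2 -
            Paper.QNT p q δ ((0:ℂ × ℂ)).1 ((0:ℂ × ℂ)).2 - (0 : ℂ × ℂ →L[ℝ] ℝ) h) =O[nhds 0]
            fun h : ℂ × ℂ => (1+δ) * (‖h‖ ^ p + ‖h‖ ^ q) := by
          apply Asymptotics.isBigO_of_le
          intro h
          have hb := boundsA p q δ hp hq hδ h.1 h.2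
          have h1 : ‖h.1‖ ^ p ≤ ‖h‖ ^ p := by
            apply Real.rpow_le_rpow (norm_nonneg _) _ hp0.le
            exact norm_fst_le h
          have h2 : ‖h.2‖ ^ q ≤ ‖h‖ ^ q := by
            apply Real.rpow_le_rpow (norm_nonneg _) _ hq0.le
            exact norm_snd_le h
          simp only [zero_add, Prod.fst_zero, Prod.snd_zero, ContinuousLinearMap.zero_apply,
            hQ0, sub_zero]
          rw [Real.norm_eq_abs, Real.norm_eq_abs, abs_of_nonneg hb.1,
            abs_of_nonneg (by positivity)]
          nlinarith [hb.2, Real.rpow_nonneg (norm_nonneg h) p, Real.rpow_nonneg (norm_nonneg h) q]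
        refine hbig.trans_isLittleO ?_
        exact ((isLittleO_rpow_norm hp1).add (isLittleO_rpow_norm hq1)).const_mul_left (1+δ)
      · rw [norm_zero]
        have : (0:ℝ) ≤ max (s ^ (p-1)) t := le_trans ht0 (le_max_right _ _)
        positivity
      · rw [norm_zero]
        have h1 : (0:ℝ) ≤ t ^ (q-1) := Real.rpow_nonneg ht0 _
        have h2 : (0:ℝ) ≤ 2 - q := by linarith
        positivity
    · -- genuine boundary point
      have hbdry := boundary_eq p q δ hp0 hq0 hpq hqp hv2 heq
      refine ⟨LzElse p q δ v, LeElse p q δ v, ?_, hbz_else, hbe_else⟩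
      have h₁ : HasFDerivAt (Qif p q δ)
          ((LzElse p q δ v).comp (ContinuousLinearMap.fst ℝ ℂ ℂ) +
            (LeElse p q δ v).comp (ContinuousLinearMap.snd ℝ ℂ ℂ)) v := by
        rw [← hbdry.1, ← hbdry.2.1]
        exact hasFDerivAt_Qif p q δ hp1 hq1 hv2
      have h₂ := hasFDerivAt_Qelse p q δ hp1 hq1 v
      refine glue h₁ h₂ hbdry.2.2 ?_ ?_
      · show Paper.QNT p q δ v.1 v.2 = Qif p q δ v
        rw [QNT_eq, if_pos heq.le]
      · intro x
        show Paper.QNT p q δ x.1 x.2 = Qif p q δ x ∨ Paper.QNT p q δ x.1 x.2 = Qelse p q δ x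
        rw [QNT_eq]
        split_ifs with h
        · exact Or.inl rfl
        · exact Or.inr rfl
  · -- else region
    refine ⟨LzElse p q δ v, LeElse p q δ v, ?_, hbz_else, hbe_else⟩
    refine (hasFDerivAt_Qelse p q δ hp1 hq1 v).congr_of_eventuallyEq ?_
    filter_upwards [hcont2.eventually_lt hcont1 hgt] with w hw
    rw [QNT_eq, if_neg (not_le.2 hw)]

end
end S17

/-- size and gradient estimates for the Nazarov–Treil Bellman function. -/
theorem statement17 (p q δ : ℝ) (hp : 2 ≤ p) (hq : q = p / (p - 1)) (hδ : 0 < δ) :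
    (∀ ζ η : ℂ, 0 ≤ Paper.QNT p q δ ζ η ∧
      Paper.QNT p q δ ζ η ≤ (1 + δ) * (‖ζ‖ ^ p + ‖η‖ ^ q)) ∧
    Differentiable ℝ (fun v : ℂ × ℂ => Paper.QNT p q δ v.1 v.2) ∧
    (∀ ζ η : ℂ,
      ‖fderiv ℝ (fun ζ' : ℂ => Paper.QNT p q δ ζ' η) ζ‖
        ≤ (p + 2 * δ) * max (‖ζ‖ ^ (p - 1)) (‖η‖) ∧
      ‖fderiv ℝ (fun η' : ℂ => Paper.QNT p q δ ζ η') η‖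
        ≤ (q + (2 - q) * δ) * ‖η‖ ^ (q - 1)) := by
  refine ⟨fun ζ η => S17.boundsA p q δ hp hq hδ ζ η, ?_, ?_⟩
  · intro v
    obtain ⟨Lz, Le, hd, -, -⟩ := S17.main p q δ hp hq hδ v
    exact hd.differentiableAt
  · intro ζ η
    obtain ⟨Lz, Le, hd, hbz, hbe⟩ := S17.main p q δ hp hq hδ (ζ, η)
    have hz : HasFDerivAt (fun ζ' : ℂ => Paper.QNT p q δ ζ' η) Lz ζ := by
      have h := hd.comp ζ (hasFDerivAt_prodMk_left (𝕜 := ℝ) ζ η)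
      have heq : (Lz.comp (ContinuousLinearMap.fst ℝ ℂ ℂ) +
          Le.comp (ContinuousLinearMap.snd ℝ ℂ ℂ)).comp (ContinuousLinearMap.inl ℝ ℂ ℂ) = Lz := by
        refine ContinuousLinearMap.ext fun w => ?_
        simp
      rw [heq] at h
      exact h
    have he : HasFDerivAt (fun η' : ℂ => Paper.QNT p q δ ζ η') Le η := by
      have h := hd.comp η (hasFDerivAt_prodMk_right ζ η)
      have heq : (Lz.comp (ContinuousLinearMap.fst ℝ ℂ ℂ) +
          Le.comp (ContinuousLinearMap.snd ℝ ℂ ℂ)).comp (ContinuousLinearMap.inr ℝ ℂ ℂ) = Le := by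
        refine ContinuousLinearMap.ext fun w => ?_
        simp
      rw [heq] at h
      exact h
    rw [hz.fderiv, he.fderiv]
    exact ⟨hbz, hbe⟩
end
end

section
/- Let 1 < q < 2, let 0 < λ ≤ Λ, and let A and B be n×n complex matrices belonging to 𝒜_{λ,Λ}; set λ_A := min{ Re⟨Aξ,ξ⟩ : |ξ| = 1 }. Let Φ : ℂ×ℂ → ℝ be Φ(ζ,η) = |ζ|²·|η|^{2−q}. Then for every v = (ζ,η) ∈ ℂ×ℂ with |ζ| < |η|^{q−1} (so in particular η ≠ 0), Φ is twice real-Fréchet differentiable at v and, for every ω = (ω₁,ω₂) ∈ ℂⁿ×ℂⁿ, H_Φ^{(A,B)}[v;ω] ≥ 2·λ_A·|η|^{2−q}·|ω₁|² − 4(2−q)·Λ·|ω₁|·|ω₂| + ((2−q)²/2)·Δ_{2−q}(B)·|η|^{q−2}·|ω₂|². -/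
open scoped BigOperators ComplexConjugate Matrix

noncomputable section

section Aux19Calc
open scoped RealInnerProductSpace


/-- bilinear CLM `a ↦ (w ↦ ⟪a, w.1⟫_ℝ)` -/
def L1 : ℂ →L[ℝ] (ℂ × ℂ) →L[ℝ] ℝ :=
  LinearMap.mkContinuous₂
    (LinearMap.mk₂ ℝ (fun a w => (inner ℝ a w.1 : ℝ))
      (fun a b w => inner_add_left _ _ _)
      (fun c a w => real_inner_smul_left _ _ _)
      (fun a w w' => inner_add_right _ _ _)
      (fun c a w => real_inner_smul_right _ _ _))
    1 (fun a w => by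
      simp only [LinearMap.mk₂_apply, one_mul]
      calc |(inner ℝ a w.1 : ℝ)| ≤ ‖a‖ * ‖w.1‖ := abs_real_inner_le_norm a w.1
        _ ≤ ‖a‖ * ‖w‖ := by
            gcongr; exact norm_fst_le w)

def L2 : ℂ →L[ℝ] (ℂ × ℂ) →L[ℝ] ℝ :=
  LinearMap.mkContinuous₂
    (LinearMap.mk₂ ℝ (fun a w => (inner ℝ a w.2 : ℝ))
      (fun a b w => inner_add_left _ _ _)
      (fun c a w => real_inner_smul_left _ _ _)
      (fun a w w' => inner_add_right _ _ _)
      (fun c a w => real_inner_smul_right _ _ _))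
    1 (fun a w => by
      simp only [LinearMap.mk₂_apply, one_mul]
      calc |(inner ℝ a w.2 : ℝ)| ≤ ‖a‖ * ‖w.2‖ := abs_real_inner_le_norm a w.2
        _ ≤ ‖a‖ * ‖w‖ := by gcongr; exact norm_snd_le w)

@[simp] lemma L1_apply (a : ℂ) (w : ℂ × ℂ) : L1 a w = (inner ℝ a w.1 : ℝ) := rfl
@[simp] lemma L2_apply (a : ℂ) (w : ℂ × ℂ) : L2 a w = (inner ℝ a w.2 : ℝ) := rfl

lemma hasFDerivAt_P1 (v : ℂ × ℂ) :
    HasFDerivAt (fun v : ℂ × ℂ => (inner ℝ v.1 v.1 : ℝ)) ((2:ℝ) • L1 v.1) v := by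
  have h := (hasFDerivAt_fst (𝕜 := ℝ) (p := v) (E := ℂ) (F := ℂ)).inner ℝ
      (hasFDerivAt_fst (𝕜 := ℝ) (p := v) (E := ℂ) (F := ℂ))
  refine h.congr_fderiv ?_
  ext w
  · simp [ContinuousLinearMap.comp_apply, fderivInnerCLM_apply, real_inner_comm]
    ring
  · simp [ContinuousLinearMap.comp_apply, fderivInnerCLM_apply]

lemma hasFDerivAt_P2 (v : ℂ × ℂ) :
    HasFDerivAt (fun v : ℂ × ℂ => (inner ℝ v.2 v.2 : ℝ)) ((2:ℝ) • L2 v.2) v := by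
  have h := (hasFDerivAt_snd (𝕜 := ℝ) (p := v) (E := ℂ) (F := ℂ)).inner ℝ
      (hasFDerivAt_snd (𝕜 := ℝ) (p := v) (E := ℂ) (F := ℂ))
  refine h.congr_fderiv ?_
  ext w
  · simp [ContinuousLinearMap.comp_apply, fderivInnerCLM_apply]
  · simp [ContinuousLinearMap.comp_apply, fderivInnerCLM_apply, real_inner_comm]
    ring

def Phi (s : ℝ) (v : ℂ × ℂ) : ℝ := (inner ℝ v.1 v.1 : ℝ) * (inner ℝ v.2 v.2 : ℝ) ^ s

def Phi' (s : ℝ) (v : ℂ × ℂ) : (ℂ × ℂ) →L[ℝ] ℝ :=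
  (inner ℝ v.1 v.1 : ℝ) • ((s * (inner ℝ v.2 v.2 : ℝ) ^ (s-1)) • ((2:ℝ) • L2 v.2))
    + ((inner ℝ v.2 v.2 : ℝ) ^ s) • ((2:ℝ) • L1 v.1)

lemma P2_ne (v : ℂ × ℂ) (hv : v.2 ≠ 0) : (inner ℝ v.2 v.2 : ℝ) ≠ 0 := by
  rw [real_inner_self_eq_norm_sq]
  exact pow_ne_zero 2 (norm_ne_zero_iff.2 hv)

lemma hasFDerivAt_Phi (s : ℝ) (v : ℂ × ℂ) (hv : v.2 ≠ 0) :
    HasFDerivAt (Phi s) (Phi' s v) v :=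
  (hasFDerivAt_P1 v).mul ((hasFDerivAt_P2 v).rpow_const (Or.inl (P2_ne v hv)))

def D2F (s : ℝ) (v w w' : ℂ × ℂ) : ℝ :=
  2*(inner ℝ v.2 v.2 : ℝ)^s * (inner ℝ w.1 w'.1 : ℝ)
  + 4*s*(inner ℝ v.2 v.2 : ℝ)^(s-1) * ((inner ℝ v.2 w.2 : ℝ) * (inner ℝ v.1 w'.1 : ℝ)
      + (inner ℝ v.1 w.1 : ℝ) * (inner ℝ v.2 w'.2 : ℝ))
  + 2*s*(inner ℝ v.1 v.1 : ℝ)*(inner ℝ v.2 v.2 : ℝ)^(s-1) * (inner ℝ w.2 w'.2 : ℝ)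
  + 4*s*(s-1)*(inner ℝ v.1 v.1 : ℝ)*(inner ℝ v.2 v.2 : ℝ)^(s-2)
      * (inner ℝ v.2 w.2 : ℝ) * (inner ℝ v.2 w'.2 : ℝ)

lemma hasFDerivAt_Phi' (s : ℝ) (v : ℂ × ℂ) (hv : v.2 ≠ 0) :
    ∃ D : (ℂ × ℂ) →L[ℝ] (ℂ × ℂ) →L[ℝ] ℝ,
      HasFDerivAt (Phi' s) D v ∧ ∀ w w', D w w' = D2F s v w w' := by
  have hne := P2_ne v hv
  have hc : HasFDerivAt (fun v : ℂ × ℂ => ((inner ℝ v.1 v.1 : ℝ) * (inner ℝ v.2 v.2 : ℝ) ^ (s-1)))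
      ((inner ℝ v.1 v.1 : ℝ) • (((s-1) * (inner ℝ v.2 v.2 : ℝ) ^ (s-1-1)) • ((2:ℝ) • L2 v.2))
        + ((inner ℝ v.2 v.2 : ℝ) ^ (s-1)) • ((2:ℝ) • L1 v.1)) v :=
    (hasFDerivAt_P1 v).mul ((hasFDerivAt_P2 v).rpow_const (Or.inl hne))
  have hL2c : HasFDerivAt (fun v : ℂ × ℂ => ((2:ℝ) • L2 v.2))
      (((2:ℝ) • L2).comp (ContinuousLinearMap.snd ℝ ℂ ℂ)) v :=
    (((2:ℝ) • L2).comp (ContinuousLinearMap.snd ℝ ℂ ℂ)).hasFDerivAt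
  have hL1c : HasFDerivAt (fun v : ℂ × ℂ => ((2:ℝ) • L1 v.1))
      (((2:ℝ) • L1).comp (ContinuousLinearMap.fst ℝ ℂ ℂ)) v :=
    (((2:ℝ) • L1).comp (ContinuousLinearMap.fst ℝ ℂ ℂ)).hasFDerivAt
  have hsm : HasFDerivAt (fun v : ℂ × ℂ =>
      (s * ((inner ℝ v.1 v.1 : ℝ) * (inner ℝ v.2 v.2 : ℝ) ^ (s-1)))) (s • _) v := hc.const_mul s
  have h1 := hsm.smul hL2c
  have hd : HasFDerivAt (fun v : ℂ × ℂ => ((inner ℝ v.2 v.2 : ℝ) ^ s))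
      ((s * (inner ℝ v.2 v.2 : ℝ) ^ (s-1)) • ((2:ℝ) • L2 v.2)) v :=
    (hasFDerivAt_P2 v).rpow_const (Or.inl hne)
  have h2 := hd.smul hL1c
  have key := h1.add h2
  have hfun : (fun v : ℂ × ℂ =>
        (s * ((inner ℝ v.1 v.1 : ℝ) * (inner ℝ v.2 v.2 : ℝ) ^ (s-1))) • ((2:ℝ) • L2 v.2)
        + ((inner ℝ v.2 v.2 : ℝ) ^ s) • ((2:ℝ) • L1 v.1)) = Phi' s := by
    funext u
    ext w <;> simp [Phi', ContinuousLinearMap.comp_apply, smul_eq_mul] <;> ring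
  rw [← hfun]
  refine ⟨_, key, ?_⟩
  intro w w'
  have e1 : s - 1 - 1 = s - 2 := by ring
  simp only [ContinuousLinearMap.add_apply, ContinuousLinearMap.smul_apply,
    ContinuousLinearMap.comp_apply, ContinuousLinearMap.smulRight_apply,
    ContinuousLinearMap.coe_fst', ContinuousLinearMap.coe_snd', L1_apply, L2_apply,
    smul_eq_mul, e1, D2F]
  ring

lemma fderiv_Phi_eventually (s : ℝ) (v : ℂ × ℂ) (hv : v.2 ≠ 0) :
    fderiv ℝ (Phi s) =ᶠ[nhds v] Phi' s := by
  have hopen : IsOpen {u : ℂ × ℂ | u.2 ≠ 0} :=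
    isOpen_compl_singleton.preimage continuous_snd
  filter_upwards [hopen.mem_nhds hv] with u hu
  exact (hasFDerivAt_Phi s u hu).fderiv

lemma second_deriv_Phi (s : ℝ) (v : ℂ × ℂ) (hv : v.2 ≠ 0) :
    (DifferentiableAt ℝ (Phi s) v ∧ DifferentiableAt ℝ (fderiv ℝ (Phi s)) v) ∧
      ∀ w w', fderiv ℝ (fderiv ℝ (Phi s)) v w w' = D2F s v w w' := by
  obtain ⟨D, hD, hDe⟩ := hasFDerivAt_Phi' s v hv
  have hev := fderiv_Phi_eventually s v hv
  refine ⟨⟨(hasFDerivAt_Phi s v hv).differentiableAt, ?_⟩, ?_⟩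
  · exact (Filter.EventuallyEq.differentiableAt_iff hev).mpr hD.differentiableAt
  · intro w w'
    rw [hev.fderiv_eq, hD.fderiv]
    exact hDe w w'

end Aux19Calc

namespace Aux19
open Paper

open Paper

def rin (a b : ℂ) : ℝ := (inner ℝ a b : ℝ)

lemma rin_eq (a b : ℂ) : rin a b = ((starRingEnd ℂ) a * b).re := by
  unfold rin; rw [Complex.inner, mul_comm]

lemma herm_self_re {n : ℕ} (z : Fin n → ℂ) :
    (herm z z).re = ∑ j, Complex.normSq (z j) := by
  unfold herm
  rw [Complex.re_sum]
  refine Finset.sum_congr rfl fun j _ => ?_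
  rw [Complex.mul_conj]
  simp

lemma herm_self_re_nonneg {n : ℕ} (z : Fin n → ℂ) : 0 ≤ (herm z z).re := by
  rw [herm_self_re]
  exact Finset.sum_nonneg fun j _ => Complex.normSq_nonneg _

lemma cnorm_nonneg {n : ℕ} (z : Fin n → ℂ) : 0 ≤ cnorm z := Real.sqrt_nonneg _

lemma cnorm_sq {n : ℕ} (z : Fin n → ℂ) : cnorm z ^ 2 = (herm z z).re :=
  Real.sq_sqrt (herm_self_re_nonneg z)

lemma cnorm_eq_zero {n : ℕ} (z : Fin n → ℂ) (h : cnorm z = 0) : z = 0 := by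
  unfold cnorm at h
  rw [Real.sqrt_eq_zero (herm_self_re_nonneg z)] at h
  rw [herm_self_re] at h
  have := (Finset.sum_eq_zero_iff_of_nonneg
    (fun j _ => Complex.normSq_nonneg (z j))).1 h
  funext j
  exact Complex.normSq_eq_zero.1 (this j (Finset.mem_univ j))

lemma cnorm_pos {n : ℕ} (z : Fin n → ℂ) (h : z ≠ 0) : 0 < cnorm z := by
  rcases lt_or_eq_of_le (cnorm_nonneg z) with h' | h'
  · exact h'
  · exact absurd (cnorm_eq_zero z h'.symm) h

lemma herm_smul {n : ℕ} (a b : ℂ) (z w : Fin n → ℂ) :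
    herm (a • z) (b • w) = a * conj b * herm z w := by
  unfold herm
  rw [Finset.mul_sum]
  refine Finset.sum_congr rfl fun j _ => ?_
  simp [Pi.smul_apply, smul_eq_mul, map_mul]
  ring

lemma vconj_smul {n : ℕ} (a : ℂ) (z : Fin n → ℂ) :
    vconj (a • z) = conj a • vconj z := by
  funext j
  simp [vconj, Pi.smul_apply, smul_eq_mul, map_mul]

lemma cnorm_smul {n : ℕ} (a : ℂ) (z : Fin n → ℂ) :
    cnorm (a • z) = ‖a‖ * cnorm z := by
  unfold cnorm
  rw [herm_smul, Complex.mul_conj]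
  rw [show ((Complex.normSq a : ℂ) * herm z z).re = Complex.normSq a * (herm z z).re by
    simp [Complex.ofReal_re]]
  rw [Real.sqrt_mul (Complex.normSq_nonneg a), ← Complex.norm_def]

lemma cnorm_vconj {n : ℕ} (z : Fin n → ℂ) : cnorm (vconj z) = cnorm z := by
  unfold cnorm
  congr 1
  rw [herm_self_re, herm_self_re]
  simp [vconj]

lemma herm_zero {n : ℕ} (w : Fin n → ℂ) : herm 0 w = 0 := by simp [herm]


lemma sum_rin_herm {n : ℕ} (ψ ω : Fin n → ℂ) :
    ∑ j, rin (ω j) (ψ j) = (herm ψ ω).re := by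
  unfold herm
  rw [Complex.re_sum]
  refine Finset.sum_congr rfl fun j _ => ?_
  rw [rin_eq, mul_comm]

lemma sum_rin_pair {n : ℕ} (a b : ℂ) (ω ψ : Fin n → ℂ) :
    ∑ j, rin a (ω j) * rin b (ψ j)
      = (herm ψ (fun j => ((rin a (ω j) : ℝ) : ℂ) * b)).re := by
  unfold herm
  rw [Complex.re_sum]
  refine Finset.sum_congr rfl fun j _ => ?_
  simp only [rin_eq, map_mul, Complex.conj_ofReal, Complex.mul_re, Complex.mul_im,
    Complex.ofReal_re, Complex.ofReal_im, Complex.conj_re, Complex.conj_im]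
  ring

lemma cnorm_scaled_le {n : ℕ} (a b : ℂ) (ω : Fin n → ℂ) :
    cnorm (fun j => ((rin a (ω j) : ℝ) : ℂ) * b)
      ≤ ‖a‖ * cnorm ω * ‖b‖ := by
  unfold cnorm
  rw [herm_self_re]
  have hb : ∀ j, Complex.normSq (((rin a (ω j) : ℝ) : ℂ) * b)
      ≤ Complex.normSq a * Complex.normSq (ω j) * Complex.normSq b := by
    intro j
    rw [Complex.normSq_mul, Complex.normSq_ofReal]
    have h1 : |rin a (ω j)| ≤ ‖a‖ * ‖ω j‖ := abs_real_inner_le_norm a (ω j)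
    have h2 : rin a (ω j) ^ 2 ≤ (‖a‖ * ‖ω j‖) ^ 2 := by
      rw [← sq_abs]
      exact pow_le_pow_left₀ (abs_nonneg _) h1 2
    have h3 : (‖a‖ * ‖ω j‖) ^ 2 = Complex.normSq a * Complex.normSq (ω j) := by
      rw [mul_pow]
      simp [Complex.sq_norm]
    nlinarith [Complex.normSq_nonneg b, h2, h3.symm.le, h3.le]
  calc Real.sqrt (∑ j, Complex.normSq (((rin a (ω j) : ℝ) : ℂ) * b))
      ≤ Real.sqrt (Complex.normSq a * (∑ j, Complex.normSq (ω j)) * Complex.normSq b) := by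
        apply Real.sqrt_le_sqrt
        rw [Finset.mul_sum, Finset.sum_mul]
        exact Finset.sum_le_sum fun j _ => by
          have := hb j; nlinarith [this]
    _ = ‖a‖ * cnorm ω * ‖b‖ := by
        rw [Real.sqrt_mul (mul_nonneg (Complex.normSq_nonneg a) (Finset.sum_nonneg fun j _ => Complex.normSq_nonneg _)), Real.sqrt_mul (Complex.normSq_nonneg a)]
        unfold cnorm
        rw [herm_self_re, ← Complex.norm_def, ← Complex.norm_def]

lemma rin_sq_pointwise (e x y : ℂ) :
    rin e x * rin e y
      = 1/2 * Complex.normSq e * (y * (starRingEnd ℂ) x).re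
        + 1/2 * (((starRingEnd ℂ) e)^2 * (y * x)).re := by
  rw [rin_eq, rin_eq]
  simp only [Complex.mul_re, Complex.mul_im, Complex.conj_re, Complex.conj_im,
    Complex.normSq_apply, pow_two]
  ring

lemma sum_rin_sq {n : ℕ} (e : ℂ) (ω ψ : Fin n → ℂ) :
    ∑ j, rin e (ω j) * rin e (ψ j)
      = 1/2 * Complex.normSq e * (herm ψ ω).re
        + 1/2 * (((starRingEnd ℂ) e)^2 * herm ψ (vconj ω)).re := by
  have h1 : (herm ψ ω).re = ∑ j, (ψ j * (starRingEnd ℂ) (ω j)).re := by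
    unfold herm; rw [Complex.re_sum]
  have h2 : (((starRingEnd ℂ) e)^2 * herm ψ (vconj ω)).re
      = ∑ j, (((starRingEnd ℂ) e)^2 * (ψ j * ω j)).re := by
    unfold herm vconj
    rw [Finset.mul_sum, Complex.re_sum]
    refine Finset.sum_congr rfl fun j _ => ?_
    rw [Complex.conj_conj]
  rw [h1, h2, Finset.mul_sum, Finset.mul_sum, ← Finset.sum_add_distrib]
  exact Finset.sum_congr rfl fun j _ => rin_sq_pointwise e (ω j) (ψ j)


section quad
variable {n : ℕ} {lam Lam : ℝ} {A : Matrix (Fin n) (Fin n) ℂ}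

/-- Quadratic lower bound from `lamA`. -/
lemma lamA_bound (hlam : 0 < lam) (hA : memA lam Lam A) (ω : Fin n → ℂ) :
    lamA A * cnorm ω ^ 2 ≤ (herm (A.mulVec ω) ω).re := by
  by_cases hω : ω = 0
  · subst hω
    simp [Matrix.mulVec_zero, herm_zero, cnorm, herm]
  · have hpos := cnorm_pos ω hω
    set c : ℝ := (cnorm ω)⁻¹ with hc
    have hcpos : 0 < c := inv_pos.2 hpos
    set ξ : Fin n → ℂ := (c : ℂ) • ω with hξ
    have hcn : cnorm ξ = 1 := by
      rw [hξ, cnorm_smul, Complex.norm_real, Real.norm_eq_abs, abs_of_pos hcpos, hc,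
        inv_mul_cancel₀ (ne_of_gt hpos)]
    have hmem : (herm (A.mulVec ξ) ξ).re ∈
        {t : ℝ | ∃ ξ : Fin n → ℂ, cnorm ξ = 1 ∧ t = (herm (A.mulVec ξ) ξ).re} :=
      ⟨ξ, hcn, rfl⟩
    have hbdd : BddBelow {t : ℝ | ∃ ξ : Fin n → ℂ, cnorm ξ = 1 ∧
        t = (herm (A.mulVec ξ) ξ).re} := by
      refine ⟨lam, fun t ht => ?_⟩
      obtain ⟨ξ', hξ', rfl⟩ := ht
      have := hA.1 ξ'
      rw [hξ'] at this
      simpa using this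
    have hle : lamA A ≤ (herm (A.mulVec ξ) ξ).re := csInf_le hbdd hmem
    have hmv : A.mulVec ξ = (c : ℂ) • A.mulVec ω := by
      rw [hξ, Matrix.mulVec_smul]
    have hherm : (herm (A.mulVec ξ) ξ).re = c^2 * (herm (A.mulVec ω) ω).re := by
      rw [hmv, hξ, herm_smul]
      rw [Complex.conj_ofReal]
      rw [show ((c:ℂ) * (c:ℂ) * herm (A.mulVec ω) ω) = ((c^2 : ℝ) : ℂ) * herm (A.mulVec ω) ω by
        push_cast; ring]
      rw [Complex.re_ofReal_mul]
    rw [hherm] at hle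
    have h2 : cnorm ω ^ 2 * lamA A ≤ cnorm ω ^2 * (c^2 * (herm (A.mulVec ω) ω).re) := by
      apply mul_le_mul_of_nonneg_left hle (by positivity)
    calc lamA A * cnorm ω ^ 2 = cnorm ω ^2 * lamA A := by ring
      _ ≤ cnorm ω ^2 * (c^2 * (herm (A.mulVec ω) ω).re) := h2
      _ = (cnorm ω * c)^2 * (herm (A.mulVec ω) ω).re := by ring
      _ = (herm (A.mulVec ω) ω).re := by
          rw [hc, mul_inv_cancel₀ (ne_of_gt hpos)]; simp

/-- `DeltaGen` quadratic lower bound. -/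
lemma deltaGen_bound (hlam : 0 < lam) (hA : memA lam Lam A) (r : ℝ) (ω : Fin n → ℂ) :
    DeltaGen r A * cnorm ω ^ 2
      ≤ (herm (A.mulVec ω) ω).re - |1 - 2 / r| * ‖herm (A.mulVec ω) (vconj ω)‖ := by
  by_cases hω : ω = 0
  · subst hω
    simp [Matrix.mulVec_zero, herm_zero, cnorm, herm]
  · have hpos := cnorm_pos ω hω
    set c : ℝ := (cnorm ω)⁻¹ with hc
    have hcpos : 0 < c := inv_pos.2 hpos
    set ξ : Fin n → ℂ := (c : ℂ) • ω with hξ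
    have hcn : cnorm ξ = 1 := by
      rw [hξ, cnorm_smul, Complex.norm_real, Real.norm_eq_abs, abs_of_pos hcpos, hc,
        inv_mul_cancel₀ (ne_of_gt hpos)]
    have hbdd : BddBelow {t : ℝ | ∃ ξ : Fin n → ℂ, cnorm ξ = 1 ∧
        t = (herm (A.mulVec ξ) ξ).re
          - |1 - 2 / r| * ‖herm (A.mulVec ξ) (vconj ξ)‖} := by
      refine ⟨lam - |1 - 2/r| * Lam, fun t ht => ?_⟩
      obtain ⟨ξ', hξ', rfl⟩ := ht
      have h1 := hA.1 ξ'
      have h2 := hA.2 ξ' (vconj ξ')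
      rw [hξ'] at h1 h2
      rw [cnorm_vconj, hξ'] at h2
      have h3 : |1 - 2/r| * ‖herm (A.mulVec ξ') (vconj ξ')‖ ≤ |1 - 2/r| * Lam := by
        apply mul_le_mul_of_nonneg_left _ (abs_nonneg _)
        simpa using h2
      simp only [one_pow, mul_one] at h1
      linarith
    have hle : DeltaGen r A ≤ (herm (A.mulVec ξ) ξ).re
        - |1 - 2 / r| * ‖herm (A.mulVec ξ) (vconj ξ)‖ :=
      csInf_le hbdd ⟨ξ, hcn, rfl⟩
    have hmv : A.mulVec ξ = (c : ℂ) • A.mulVec ω := by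
      rw [hξ, Matrix.mulVec_smul]
    have e1 : (herm (A.mulVec ξ) ξ).re = c^2 * (herm (A.mulVec ω) ω).re := by
      rw [hmv, hξ, herm_smul, Complex.conj_ofReal]
      rw [show ((c:ℂ) * (c:ℂ) * herm (A.mulVec ω) ω) = ((c^2 : ℝ) : ℂ) * herm (A.mulVec ω) ω by
        push_cast; ring]
      rw [Complex.re_ofReal_mul]
    have e2 : ‖herm (A.mulVec ξ) (vconj ξ)‖
        = c^2 * ‖herm (A.mulVec ω) (vconj ω)‖ := by
      rw [hmv, hξ, vconj_smul, Complex.conj_ofReal, herm_smul, Complex.conj_ofReal]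
      rw [show ((c:ℂ) * (c:ℂ) * herm (A.mulVec ω) (vconj ω))
          = ((c^2 : ℝ) : ℂ) * herm (A.mulVec ω) (vconj ω) by push_cast; ring]
      rw [norm_mul, Complex.norm_real, Real.norm_eq_abs, abs_of_pos (by positivity)]
    rw [e1, e2] at hle
    have h2 : cnorm ω ^2 * DeltaGen r A ≤ cnorm ω ^2 * (c^2 * ((herm (A.mulVec ω) ω).re
        - |1 - 2/r| * ‖herm (A.mulVec ω) (vconj ω)‖)) := by
      apply mul_le_mul_of_nonneg_left _ (by positivity)
      linarith
    have hcc : cnorm ω ^2 * c^2 = 1 := by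
      rw [hc]
      field_simp
    calc DeltaGen r A * cnorm ω ^ 2 = cnorm ω ^2 * DeltaGen r A := by ring
      _ ≤ cnorm ω ^2 * (c^2 * ((herm (A.mulVec ω) ω).re
          - |1 - 2/r| * ‖herm (A.mulVec ω) (vconj ω)‖)) := h2
      _ = (cnorm ω ^2 * c^2) * ((herm (A.mulVec ω) ω).re
          - |1 - 2/r| * ‖herm (A.mulVec ω) (vconj ω)‖) := by ring
      _ = _ := by rw [hcc, one_mul]

/-- `DeltaGen (2-q) A ≤ 0` when `n ≥ 1`. -/
lemma deltaGen_nonpos (hlam : 0 < lam) (hA : memA lam Lam A) (hn : 0 < n)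
    {q : ℝ} (hq1 : 1 < q) (hq2 : q < 2) :
    DeltaGen (2 - q) A ≤ 0 := by
  set e₀ : Fin n → ℂ := fun j => if j = ⟨0, hn⟩ then 1 else 0 with he
  have hherm : ∀ w : Fin n → ℂ, herm e₀ w = conj (w ⟨0, hn⟩) := by
    intro w
    rw [herm, Finset.sum_eq_single ⟨0, hn⟩]
    · simp [he]
    · intro b _ hb; simp [he, hb]
    · intro h; exact absurd (Finset.mem_univ _) h
  have hcn : cnorm e₀ = 1 := by
    unfold cnorm
    rw [hherm]
    simp [he]
  have hvconj : vconj e₀ = e₀ := by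
    funext j
    by_cases hj : j = ⟨0, hn⟩ <;> simp [vconj, he, hj]
  have hbdd : BddBelow {t : ℝ | ∃ ξ : Fin n → ℂ, cnorm ξ = 1 ∧
      t = (herm (A.mulVec ξ) ξ).re
        - |1 - 2 / (2-q)| * ‖herm (A.mulVec ξ) (vconj ξ)‖} := by
    refine ⟨lam - |1 - 2/(2-q)| * Lam, fun t ht => ?_⟩
    obtain ⟨ξ', hξ', rfl⟩ := ht
    have h1 := hA.1 ξ'
    have h2 := hA.2 ξ' (vconj ξ')
    rw [hξ'] at h1 h2
    rw [cnorm_vconj, hξ'] at h2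
    have h3 : |1 - 2/(2-q)| * ‖herm (A.mulVec ξ') (vconj ξ')‖
        ≤ |1 - 2/(2-q)| * Lam := by
      apply mul_le_mul_of_nonneg_left _ (abs_nonneg _)
      simpa using h2
    simp only [one_pow, mul_one] at h1
    linarith
  have hle := csInf_le hbdd ⟨e₀, hcn, rfl⟩
  refine hle.trans ?_
  rw [hvconj]
  set Z := herm (A.mulVec e₀) e₀ with hZ
  have hre : lam ≤ Z.re := by
    have := hA.1 e₀
    rw [hcn] at this
    simpa using this
  have habsZ : Z.re ≤ ‖Z‖ := Complex.re_le_norm Z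
  have h2q : (0:ℝ) < 2 - q := by linarith
  have hcq : 1 ≤ |1 - 2/(2-q)| := by
    rw [show 1 - 2/(2-q) = -(q/(2-q)) by field_simp; ring, abs_neg,
      abs_of_pos (by positivity), le_div_iff₀ h2q]
    linarith
  nlinarith [abs_nonneg (1 - 2/(2-q)), norm_nonneg Z]

end quad

end Aux19

set_option maxHeartbeats 4000000 in
/-- lower bound for the generalized Hessian of
`Φ(ζ,η) = |ζ|²|η|^{2−q}` in the region `|ζ| < |η|^{q−1}`. -/
theorem statement19 (n : ℕ) (q lam Lam : ℝ) (hq1 : 1 < q) (hq2 : q < 2)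
    (hlam : 0 < lam) (hLam : lam ≤ Lam)
    (A B : Matrix (Fin n) (Fin n) ℂ) (hA : Paper.memA lam Lam A)
    (hB : Paper.memA lam Lam B)
    (ζ η : ℂ) (hv : ‖ζ‖ < ‖η‖ ^ (q - 1)) :
    Paper.TwiceDiffAt2
      (fun v : ℂ × ℂ => ‖v.1‖ ^ (2 : ℝ) * ‖v.2‖ ^ (2 - q)) (ζ, η) ∧
    ∀ ω₁ ω₂ : Fin n → ℂ,
      2 * Paper.lamA A * ‖η‖ ^ (2 - q) * Paper.cnorm ω₁ ^ 2
          - 4 * (2 - q) * Lam * Paper.cnorm ω₁ * Paper.cnorm ω₂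
          + ((2 - q) ^ 2 / 2) * Paper.DeltaGen (2 - q) B
              * ‖η‖ ^ (q - 2) * Paper.cnorm ω₂ ^ 2
        ≤ Paper.HAB
            (fun v : ℂ × ℂ => ‖v.1‖ ^ (2 : ℝ) * ‖v.2‖ ^ (2 - q))
            A B (ζ, η) ω₁ ω₂ := by
  classical
  have h2q : (0:ℝ) < 2 - q := by linarith
  set s : ℝ := (2 - q) / 2 with hs_def
  have hs : 0 < s := by positivity
  have hs2 : 2 * s = 2 - q := by rw [hs_def]; ring
  have hs1 : s < 1 := by rw [hs_def]; linarith
  -- η ≠ 0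
  have hη : η ≠ 0 := by
    intro h
    rw [h] at hv
    simp only [norm_zero] at hv
    rw [Real.zero_rpow (by linarith : q - 1 ≠ 0)] at hv
    exact absurd hv (not_lt.2 (norm_nonneg ζ))
  have hv2 : ((ζ, η) : ℂ × ℂ).2 ≠ 0 := hη
  -- the function equals Phi s
  have habs2 : ∀ z : ℂ, ‖z‖ ^ (2:ℝ) = (inner ℝ z z : ℝ) := by
    intro z
    rw [real_inner_self_eq_norm_sq,
      show (2:ℝ) = ((2:ℕ):ℝ) by norm_num, Real.rpow_natCast]
  have hfeq : (fun v : ℂ × ℂ => ‖v.1‖ ^ (2:ℝ) * ‖v.2‖ ^ (2 - q))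
      = Phi s := by
    funext v
    unfold Phi
    rw [habs2 v.1]
    congr 1
    rw [real_inner_self_eq_norm_sq,
      ← Real.rpow_natCast (‖v.2‖) 2, ← Real.rpow_mul (norm_nonneg v.2)]
    norm_num
    rw [hs_def]
    ring_nf
  obtain ⟨⟨hd1, hd2⟩, heval⟩ := second_deriv_Phi s (ζ, η) hv2
  constructor
  · rw [Paper.TwiceDiffAt2, hfeq]
    exact ⟨hd1, hd2⟩
  intro ω₁ ω₂
  -- names
  set t : ℝ := ‖η‖ with ht_def
  have ht : 0 < t := norm_pos_iff.mpr hη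
  set aζ : ℝ := ‖ζ‖ with haζ_def
  have haζ0 : 0 ≤ aζ := norm_nonneg ζ
  have haζ : aζ ≤ t ^ (q - 1) := le_of_lt hv
  set n1 : ℝ := Paper.cnorm ω₁ with hn1_def
  set n2 : ℝ := Paper.cnorm ω₂ with hn2_def
  have hn1 : 0 ≤ n1 := Aux19.cnorm_nonneg ω₁
  have hn2 : 0 ≤ n2 := Aux19.cnorm_nonneg ω₂
  set RA : ℝ := (Paper.herm (A.mulVec ω₁) ω₁).re with hRA_def
  set RB : ℝ := (Paper.herm (B.mulVec ω₂) ω₂).re with hRB_def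
  set X : ℂ := Paper.herm (B.mulVec ω₂) (Paper.vconj ω₂) with hX_def
  set SA : ℝ := (Paper.herm (A.mulVec ω₁)
    (fun j => ((Aux19.rin η (ω₂ j) : ℝ) : ℂ) * ζ)).re with hSA_def
  set SB : ℝ := (Paper.herm (B.mulVec ω₂)
    (fun j => ((Aux19.rin ζ (ω₁ j) : ℝ) : ℂ) * η)).re with hSB_def
  -- rpow conversions
  have hK2 : (inner ℝ η η : ℝ) = t ^ (2:ℕ) := by
    rw [real_inner_self_eq_norm_sq]
  have hrp : ∀ a : ℝ, (inner ℝ η η : ℝ) ^ a = t ^ (2 * a) := by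
    intro a
    rw [hK2, ← Real.rpow_natCast t 2, ← Real.rpow_mul ht.le]
    norm_num
  have e_s : (inner ℝ η η : ℝ) ^ s = t ^ (2 - q) := by rw [hrp, hs2]
  have e_s1 : (inner ℝ η η : ℝ) ^ (s - 1) = t ^ (-q) := by
    rw [hrp]
    congr 1
    rw [hs_def]; ring
  have e_s2 : (inner ℝ η η : ℝ) ^ (s - 2) = t ^ (-q - 2) := by
    rw [hrp]
    congr 1
    rw [hs_def]; ring
  have hP : (inner ℝ ζ ζ : ℝ) = aζ ^ 2 := by
    rw [real_inner_self_eq_norm_sq]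
  -- decompose HAB
  have hsum : Paper.HAB
      (fun v : ℂ × ℂ => ‖v.1‖ ^ (2 : ℝ) * ‖v.2‖ ^ (2 - q))
      A B (ζ, η) ω₁ ω₂
      = 2 * t^(2-q) * RA + 4*s*t^(-q) * (SA + SB)
        + (2*s*aζ^2*t^(-q) * RB
          + 4*s*(s-1)*aζ^2*t^(-q-2) * (1/2 * Complex.normSq η * RB
              + 1/2 * (((starRingEnd ℂ) η)^2 * X).re)) := by
    unfold Paper.HAB
    rw [hfeq]
    calc (∑ j, fderiv ℝ (fderiv ℝ (Phi s)) (ζ, η) (ω₁ j, ω₂ j)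
            (A.mulVec ω₁ j, B.mulVec ω₂ j))
        = ∑ j, D2F s (ζ, η) (ω₁ j, ω₂ j) (A.mulVec ω₁ j, B.mulVec ω₂ j) :=
          Finset.sum_congr rfl fun j _ => heval _ _
      _ = ∑ j, (2 * t^(2-q) * Aux19.rin (ω₁ j) (A.mulVec ω₁ j)
            + 4*s*t^(-q) * (Aux19.rin η (ω₂ j) * Aux19.rin ζ (A.mulVec ω₁ j)
                + Aux19.rin ζ (ω₁ j) * Aux19.rin η (B.mulVec ω₂ j))
            + 2*s*aζ^2*t^(-q) * Aux19.rin (ω₂ j) (B.mulVec ω₂ j)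
            + 4*s*(s-1)*aζ^2*t^(-q-2)
                * (Aux19.rin η (ω₂ j) * Aux19.rin η (B.mulVec ω₂ j))) := by
          refine Finset.sum_congr rfl fun j _ => ?_
          unfold D2F Aux19.rin
          simp only []
          rw [e_s, e_s1, e_s2, hP]
          ring
      _ = _ := by
          rw [Finset.sum_add_distrib, Finset.sum_add_distrib, Finset.sum_add_distrib,
            ← Finset.mul_sum, ← Finset.mul_sum, ← Finset.mul_sum, ← Finset.mul_sum]
          rw [Aux19.sum_rin_herm (A.mulVec ω₁) ω₁, Aux19.sum_rin_herm (B.mulVec ω₂) ω₂]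
          rw [Finset.sum_add_distrib, ← hRA_def, ← hRB_def]
          rw [Aux19.sum_rin_pair η ζ ω₂ (A.mulVec ω₁),
            Aux19.sum_rin_pair ζ η ω₁ (B.mulVec ω₂),
            Aux19.sum_rin_sq η ω₂ (B.mulVec ω₂)]
          rw [← hSA_def, ← hSB_def, ← hRB_def, ← hX_def]
          ring
  rw [hsum]
  clear hsum heval hfeq habs2 hd1 hd2 hv2
  -- bounds
  have hRAb : Paper.lamA A * n1 ^ 2 ≤ RA := Aux19.lamA_bound hlam hA ω₁
  have hSAb : -(Lam * n1 * (t * n2 * aζ)) ≤ SA := by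
    have h1 : |SA| ≤ ‖Paper.herm (A.mulVec ω₁)
        (fun j => ((Aux19.rin η (ω₂ j) : ℝ) : ℂ) * ζ)‖ := Complex.abs_re_le_norm _
    have h2 := hA.2 ω₁ (fun j => ((Aux19.rin η (ω₂ j) : ℝ) : ℂ) * ζ)
    have h3 := Aux19.cnorm_scaled_le η ζ ω₂
    have hLn : (0:ℝ) ≤ Lam := by linarith
    have h4 : ‖Paper.herm (A.mulVec ω₁)
        (fun j => ((Aux19.rin η (ω₂ j) : ℝ) : ℂ) * ζ)‖ ≤ Lam * n1 * (t * n2 * aζ) := by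
      refine h2.trans ?_
      calc Lam * Paper.cnorm ω₁ * Paper.cnorm (fun j => ((Aux19.rin η (ω₂ j) : ℝ) : ℂ) * ζ)
          = (Lam * n1) * Paper.cnorm (fun j => ((Aux19.rin η (ω₂ j) : ℝ) : ℂ) * ζ) := rfl
        _ ≤ (Lam * n1) * (t * n2 * aζ) := by
            apply mul_le_mul_of_nonneg_left _ (mul_nonneg hLn hn1)
            exact h3
        _ = Lam * n1 * (t * n2 * aζ) := by ring
    have := (abs_le.1 (h1.trans h4)).1
    linarith
  have hSBb : -(Lam * n2 * (t * n1 * aζ)) ≤ SB := by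
    have h1 : |SB| ≤ ‖Paper.herm (B.mulVec ω₂)
        (fun j => ((Aux19.rin ζ (ω₁ j) : ℝ) : ℂ) * η)‖ := Complex.abs_re_le_norm _
    have h2 := hB.2 ω₂ (fun j => ((Aux19.rin ζ (ω₁ j) : ℝ) : ℂ) * η)
    have h3 := Aux19.cnorm_scaled_le ζ η ω₁
    have hLn : (0:ℝ) ≤ Lam := by linarith
    have h4 : ‖Paper.herm (B.mulVec ω₂)
        (fun j => ((Aux19.rin ζ (ω₁ j) : ℝ) : ℂ) * η)‖ ≤ Lam * n2 * (t * n1 * aζ) := by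
      refine h2.trans ?_
      calc Lam * Paper.cnorm ω₂ * Paper.cnorm (fun j => ((Aux19.rin ζ (ω₁ j) : ℝ) : ℂ) * η)
          = (Lam * n2) * Paper.cnorm (fun j => ((Aux19.rin ζ (ω₁ j) : ℝ) : ℂ) * η) := rfl
        _ ≤ (Lam * n2) * (aζ * n1 * t) := by
            apply mul_le_mul_of_nonneg_left _ (mul_nonneg hLn hn2)
            exact h3
        _ = Lam * n2 * (t * n1 * aζ) := by ring
    have := (abs_le.1 (h1.trans h4)).1
    linarith
  -- rpow products
  have hone : t ^ (-q) * t ^ (q-1) * t = 1 := by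
    nth_rewrite 3 [← Real.rpow_one t]
    rw [← Real.rpow_add ht, ← Real.rpow_add ht,
      show -q + (q-1) + 1 = 0 by ring, Real.rpow_zero]
  have htq : 0 < t ^ (-q) := Real.rpow_pos_of_pos ht _
  have ht2q : 0 < t ^ (2-q) := Real.rpow_pos_of_pos ht _
  have htq2 : 0 < t ^ (q-2) := Real.rpow_pos_of_pos ht _
  -- G1
  have G1 : 2 * Paper.lamA A * t ^ (2-q) * n1 ^ 2 ≤ 2 * t^(2-q) * RA := by
    have h := mul_le_mul_of_nonneg_left hRAb (by positivity : (0:ℝ) ≤ 2 * t^(2-q))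
    calc 2 * Paper.lamA A * t ^ (2-q) * n1 ^ 2
        = 2 * t^(2-q) * (Paper.lamA A * n1 ^ 2) := by ring
      _ ≤ 2 * t^(2-q) * RA := h
  -- G2
  have G2 : -(4 * (2-q) * Lam * n1 * n2) ≤ 4*s*t^(-q) * (SA + SB) := by
    have hLn : 0 ≤ Lam := by linarith
    have key : -(2 * (Lam * n1 * n2 * (t * t^(q-1)))) ≤ SA + SB := by
      have b1 : Lam * n1 * (t * n2 * aζ) ≤ Lam * n1 * n2 * (t * t^(q-1)) := by
        calc Lam * n1 * (t * n2 * aζ) = (Lam * n1 * (t * n2)) * aζ := by ring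
          _ ≤ (Lam * n1 * (t * n2)) * t^(q-1) := by
              refine mul_le_mul_of_nonneg_left haζ ?_
              exact mul_nonneg (mul_nonneg hLn hn1) (mul_nonneg ht.le hn2)
          _ = Lam * n1 * n2 * (t * t^(q-1)) := by ring
      have b2 : Lam * n2 * (t * n1 * aζ) ≤ Lam * n1 * n2 * (t * t^(q-1)) := by
        calc Lam * n2 * (t * n1 * aζ) = (Lam * n2 * (t * n1)) * aζ := by ring
          _ ≤ (Lam * n2 * (t * n1)) * t^(q-1) := by
              refine mul_le_mul_of_nonneg_left haζ ?_
              exact mul_nonneg (mul_nonneg hLn hn2) (mul_nonneg ht.le hn1)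
          _ = Lam * n1 * n2 * (t * t^(q-1)) := by ring
      linarith only [b1, b2, hSAb, hSBb]
    have key2 := mul_le_mul_of_nonneg_left key (by positivity : (0:ℝ) ≤ 4*s*t^(-q))
    have e : 4*s*t^(-q) * -(2 * (Lam * n1 * n2 * (t * t^(q-1))))
        = -(8*s*Lam*n1*n2) * (t^(-q) * t^(q-1) * t) := by ring
    rw [e, hone, mul_one] at key2
    have e2 : 8 * s = 4 * (2 - q) := by rw [hs_def]; ring
    calc -(4*(2-q)*Lam*n1*n2) = -(8*s*Lam*n1*n2) := by rw [e2]
      _ ≤ 4*s*t^(-q) * (SA + SB) := key2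
  -- G3
  have hNSη : Complex.normSq η = t^(2:ℕ) := by
    rw [← Complex.sq_norm]
  have hReX : (((starRingEnd ℂ) η)^2 * X).re ≤ t^(2:ℕ) * ‖X‖ := by
    refine (Complex.re_le_norm _).trans ?_
    rw [norm_mul, norm_pow, Complex.norm_conj]
  have ht22 : t^(-q-2) * t^(2:ℕ) = t^(-q) := by
    rw [← Real.rpow_natCast t 2, ← Real.rpow_add ht]
    norm_num
  have hcq_eq : |1 - 2/(2-q)| = (1-s)/s := by
    rw [show 1 - 2/(2-q) = -(q/(2-q)) by field_simp; ring, abs_neg,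
      abs_of_pos (by positivity)]
    rw [hs_def]
    field_simp
    ring
  have hdelta : Paper.DeltaGen (2-q) B * n2^2 ≤ RB - ((1-s)/s) * ‖X‖ := by
    have := Aux19.deltaGen_bound hlam hB (2-q) ω₂
    rw [hcq_eq] at this
    exact this
  have hDn2 : Paper.DeltaGen (2-q) B * n2^2 ≤ 0 := by
    rcases Nat.eq_zero_or_pos n with hn | hn
    · have : n2 = 0 := by
        subst hn
        rw [hn2_def]
        simp [Paper.cnorm, Paper.herm]
      rw [this]
      simp
    · exact mul_nonpos_of_nonpos_of_nonneg
        (Aux19.deltaGen_nonpos hlam hB hn hq1 hq2) (sq_nonneg _)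
  set Δ : ℝ := Paper.DeltaGen (2-q) B with hΔ_def
  set absX : ℝ := ‖X‖ with habsX_def
  have habsX0 : 0 ≤ absX := norm_nonneg X
  have G3 : ((2-q)^2/2) * Δ * t^(q-2) * n2^2
      ≤ 2*s*aζ^2*t^(-q) * RB
        + 4*s*(s-1)*aζ^2*t^(-q-2) * (1/2 * Complex.normSq η * RB
            + 1/2 * (((starRingEnd ℂ) η)^2 * X).re) := by
    have hcoef : 2*s*(s-1)*aζ^2*t^(-q-2) ≤ 0 := by
      have h1 : (0:ℝ) ≤ 2*s*aζ^2*t^(-q-2) := by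
        refine mul_nonneg (mul_nonneg (mul_nonneg ?_ hs.le) (sq_nonneg _)) ?_
        · norm_num
        · exact (Real.rpow_pos_of_pos ht _).le
      have h2 : 2*s*(s-1)*aζ^2*t^(-q-2) = (s-1) * (2*s*aζ^2*t^(-q-2)) := by ring
      rw [h2]
      exact mul_nonpos_of_nonpos_of_nonneg (by linarith) h1
    have step1 : 2*s*(s-1)*aζ^2*t^(-q-2) * (t^(2:ℕ) * absX)
        ≤ 2*s*(s-1)*aζ^2*t^(-q-2) * (((starRingEnd ℂ) η)^2 * X).re := by
      apply mul_le_mul_of_nonpos_left _ hcoef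
      exact hReX
    have hT : 2*s*s*aζ^2*t^(-q) * (RB - ((1-s)/s) * absX)
        ≤ 2*s*aζ^2*t^(-q) * RB
          + 4*s*(s-1)*aζ^2*t^(-q-2) * (1/2 * Complex.normSq η * RB
              + 1/2 * (((starRingEnd ℂ) η)^2 * X).re) := by
      have expand : 2*s*aζ^2*t^(-q) * RB
          + 4*s*(s-1)*aζ^2*t^(-q-2) * (1/2 * Complex.normSq η * RB
              + 1/2 * (((starRingEnd ℂ) η)^2 * X).re)
          = 2*s*aζ^2*t^(-q) * RB + 2*s*(s-1)*aζ^2*(t^(-q-2) * t^(2:ℕ)) * RB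
            + 2*s*(s-1)*aζ^2*t^(-q-2) * (((starRingEnd ℂ) η)^2 * X).re := by
        rw [hNSη]
        ring
      rw [expand, ht22]
      have lhs_eq : 2*s*s*aζ^2*t^(-q) * (RB - ((1-s)/s) * absX)
          = 2*s*aζ^2*t^(-q) * RB + 2*s*(s-1)*aζ^2*t^(-q) * RB
            + 2*s*(s-1)*aζ^2*(t^(-q-2) * t^(2:ℕ)) * absX := by
        rw [ht22]
        field_simp
        ring
      rw [lhs_eq]
      have : 2*s*(s-1)*aζ^2*(t^(-q-2) * t^(2:ℕ)) * absX
          = 2*s*(s-1)*aζ^2*t^(-q-2) * (t^(2:ℕ) * absX) := by ring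
      rw [this]
      linarith only [step1]
    refine le_trans ?_ hT
    -- case split on br
    set br : ℝ := RB - ((1-s)/s) * absX with hbr_def
    have h2s2 : (2-q)^2/2 = 2*s*s := by rw [hs_def]; ring
    rw [h2s2]
    rcases le_or_gt 0 br with hbr | hbr
    · have left_np : 2*s*s * Δ * t^(q-2) * n2^2 ≤ 0 := by
        have h1 : (0:ℝ) ≤ 2*s*s*t^(q-2) := by positivity
        calc 2*s*s * Δ * t^(q-2) * n2^2 = (2*s*s*t^(q-2)) * (Δ * n2^2) := by ring
          _ ≤ 0 := mul_nonpos_of_nonneg_of_nonpos h1 hDn2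
      have right_nn : 0 ≤ 2*s*s*aζ^2*t^(-q) * br := by
        refine mul_nonneg ?_ hbr
        refine mul_nonneg (mul_nonneg (mul_nonneg ?_ hs.le) (sq_nonneg _)) htq.le
        have : (0:ℝ) ≤ 2*s := by linarith
        exact this.trans (le_of_eq rfl)
      linarith only [left_np, right_nn]
    · -- br < 0 : use aζ^2 ≤ t^(2q-2)
      have hP2 : aζ^2 ≤ t^(2*q-2) := by
        have h1 : aζ^2 ≤ (t^(q-1))^2 := pow_le_pow_left₀ haζ0 haζ 2
        have h2 : (t^(q-1))^(2:ℕ) = t^(2*q-2) := by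
          rw [← Real.rpow_natCast (t^(q-1)) 2, ← Real.rpow_mul ht.le]
          norm_num
          ring_nf
        calc aζ^2 ≤ (t^(q-1))^2 := h1
          _ = t^(2*q-2) := h2
      have hq2t : t^(2*q-2) * t^(-q) = t^(q-2) := by
        rw [← Real.rpow_add ht]
        congr 1
        ring
      have c1 : 2*s*s*t^(-q)*br * t^(2*q-2) ≤ 2*s*s*t^(-q)*br * aζ^2 := by
        apply mul_le_mul_of_nonpos_left hP2
        have hpos : (0:ℝ) < 2*s*s*t^(-q) := by positivity
        calc 2*s*s*t^(-q)*br = (2*s*s*t^(-q)) * br := by ring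
          _ ≤ 0 := mul_nonpos_of_nonneg_of_nonpos hpos.le hbr.le
      have c2 : 2*s*s*t^(-q)*br * t^(2*q-2) = 2*s*s*t^(q-2)*br := by
        rw [show 2*s*s*t^(-q)*br * t^(2*q-2) = 2*s*s*(t^(2*q-2) * t^(-q))*br by ring, hq2t]
      have c3 : 2*s*s*t^(q-2) * (Δ * n2^2) ≤ 2*s*s*t^(q-2)*br := by
        apply mul_le_mul_of_nonneg_left _ (by positivity : (0:ℝ) ≤ 2*s*s*t^(q-2))
        exact hdelta
      calc 2*s*s * Δ * t^(q-2) * n2^2 = 2*s*s*t^(q-2) * (Δ * n2^2) := by ring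
        _ ≤ 2*s*s*t^(q-2)*br := c3
        _ = 2*s*s*t^(-q)*br * t^(2*q-2) := c2.symm
        _ ≤ 2*s*s*t^(-q)*br * aζ^2 := c1
        _ = 2*s*s*aζ^2*t^(-q) * br := by ring
  linarith only [G1, G2, G3]
end
end
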